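/- arXiv:2602.15455 — 5 statements merged into one kernel-verified Lean document; each statement's English description precedes it below -/
import Mathlib

section
/- Let k ≥ 2 be a fixed integer. For each n > k, let (x^{(n)}_m)_{m≥0} be the k-averaging process on ℝ^n started from the initial vector x_0 = (1, 0, …, 0), and set T_n(m) = ∑_{i=1}^n |x^{(n)}_{m,i} − 1/n|. Then for any fixed real number θ with 0 < θ < 1/(k log k), the random variables T_n(⌊θ n log n⌋) converge to 2 in probability as n → ∞. -/
open MeasureTheory ProbabilityTheory Filter

noncomputable section

instance (α : Type*) : MeasurableSpace (Finset α) := ⊤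

/-- One averaging step: replace all coordinates in `A` by their average. -/
def avgStep {n : ℕ} (k : ℕ) (A : Finset (Fin n)) (x : Fin n → ℝ) : Fin n → ℝ :=
  fun i => if i ∈ A then (∑ j ∈ A, x j) / k else x i

/-- The `k`-averaging process driven by the sequence of chosen subsets `A · ω`. -/
def proc {Ω : Type*} {n : ℕ} (k : ℕ) (x0 : Fin n → ℝ) (A : ℕ → Ω → Finset (Fin n))
    (ω : Ω) : ℕ → Fin n → ℝ
  | 0 => x0
  | m + 1 => avgStep k (A m ω) (proc k x0 A ω m)

instance (α : Type*) : MeasurableSingletonClass (Finset α) :=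
  ⟨fun _ => MeasurableSpace.measurableSet_top⟩

set_option linter.unusedSectionVars false
set_option linter.unusedVariables false

namespace AvgAux

variable {n k : ℕ} {Ω : Type*} [MeasurableSpace Ω]

/-- subadditivity of rpow on two nonneg reals -/
lemma rpow_add_le (a b : ℝ) (ha : 0 ≤ a) (hb : 0 ≤ b) {p : ℝ} (hp0 : 0 ≤ p) (hp1 : p ≤ 1) :
    (a + b) ^ p ≤ a ^ p + b ^ p := by
  have h := NNReal.rpow_add_le_add_rpow a.toNNReal b.toNNReal hp0 hp1
  have hcoe : ((a.toNNReal + b.toNNReal : NNReal) : ℝ) = a + b := by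
    simp [Real.coe_toNNReal _ ha, Real.coe_toNNReal _ hb]
  calc (a + b) ^ p = (((a.toNNReal + b.toNNReal : NNReal) : ℝ)) ^ p := by rw [hcoe]
    _ = (((a.toNNReal + b.toNNReal) ^ p : NNReal) : ℝ) := by
        rw [NNReal.coe_rpow]
    _ ≤ ((a.toNNReal ^ p + b.toNNReal ^ p : NNReal) : ℝ) := by exact_mod_cast h
    _ = a ^ p + b ^ p := by
        push_cast [NNReal.coe_rpow, Real.coe_toNNReal _ ha, Real.coe_toNNReal _ hb]
        ring

lemma rpow_sum_le {ι : Type*} (t : Finset ι) (f : ι → ℝ) (hf : ∀ i ∈ t, 0 ≤ f i)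
    {p : ℝ} (hp0 : 0 < p) (hp1 : p ≤ 1) :
    (∑ i ∈ t, f i) ^ p ≤ ∑ i ∈ t, f i ^ p := by
  induction t using Finset.cons_induction with
  | empty => simp [Real.zero_rpow hp0.ne']
  | cons a t ha ih =>
    rw [Finset.sum_cons, Finset.sum_cons]
    have h1 : (f a + ∑ i ∈ t, f i) ^ p ≤ f a ^ p + (∑ i ∈ t, f i) ^ p :=
      rpow_add_le _ _ (hf a (Finset.mem_cons_self a t))
        (Finset.sum_nonneg fun i hi => hf i (Finset.mem_cons_of_mem hi)) hp0.le hp1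
    exact h1.trans (by
      have := ih (fun i hi => hf i (Finset.mem_cons_of_mem hi))
      linarith)


lemma sum_split (s : Finset (Fin n)) (f : Fin n → ℝ) :
    ∑ i, f i = ∑ i ∈ s, f i + ∑ i ∈ sᶜ, f i := by
  rw [Finset.sum_add_sum_compl]

lemma avgStep_nonneg (hk : 0 < k) (s : Finset (Fin n)) {x : Fin n → ℝ} (hx : ∀ i, 0 ≤ x i) :
    ∀ i, 0 ≤ avgStep k s x i := by
  intro i
  unfold avgStep
  split
  · exact div_nonneg (Finset.sum_nonneg fun j _ => hx j) (by positivity)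
  · exact hx i

lemma sum_avgStep (hk : 0 < k) {s : Finset (Fin n)} (hs : s.card = k) (x : Fin n → ℝ) :
    ∑ i, avgStep k s x i = ∑ i, x i := by
  rw [sum_split s (avgStep k s x), sum_split s x]
  congr 1
  · have : ∀ i ∈ s, avgStep k s x i = (∑ j ∈ s, x j) / k := by
      intro i hi; simp [avgStep, hi]
    rw [Finset.sum_congr rfl this, Finset.sum_const, hs, nsmul_eq_mul]
    field_simp
  · refine Finset.sum_congr rfl fun i hi => ?_
    simp [avgStep, (Finset.mem_compl.1 hi)]

lemma phi_step (hk : 0 < k) {s : Finset (Fin n)} (hs : s.card = k) (x : Fin n → ℝ)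
    {p : ℝ} (hp0 : 0 < p) (hp1 : p ≤ 1) :
    ∑ i, |avgStep k s x i| ^ p
      ≤ ∑ i, |x i| ^ p + ((k : ℝ) ^ (1 - p) - 1) * ∑ i ∈ s, |x i| ^ p := by
  have hk0 : (0:ℝ) < (k:ℝ) := by exact_mod_cast hk
  rw [sum_split s (fun i => |avgStep k s x i| ^ p), sum_split s (fun i => |x i| ^ p)]
  have h2 : ∑ i ∈ sᶜ, |avgStep k s x i| ^ p = ∑ i ∈ sᶜ, |x i| ^ p := by
    refine Finset.sum_congr rfl fun i hi => ?_
    simp [avgStep, (Finset.mem_compl.1 hi)]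
  rw [h2]
  have h1 : ∑ i ∈ s, |avgStep k s x i| ^ p ≤ (k:ℝ) ^ (1-p) * ∑ i ∈ s, |x i| ^ p := by
    have hval : ∀ i ∈ s, |avgStep k s x i| ^ p = (|∑ j ∈ s, x j| / k) ^ p := by
      intro i hi
      simp [avgStep, hi, abs_div, abs_of_nonneg hk0.le]
    rw [Finset.sum_congr rfl hval, Finset.sum_const, hs, nsmul_eq_mul]
    rw [Real.div_rpow (abs_nonneg _) hk0.le]
    have hsum_le : |∑ j ∈ s, x j| ^ p ≤ ∑ j ∈ s, |x j| ^ p := by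
      calc |∑ j ∈ s, x j| ^ p ≤ (∑ j ∈ s, |x j|) ^ p :=
            Real.rpow_le_rpow (abs_nonneg _) (Finset.abs_sum_le_sum_abs _ _) hp0.le
        _ ≤ ∑ j ∈ s, |x j| ^ p := rpow_sum_le _ _ (fun j _ => abs_nonneg _) hp0 hp1
    have hkp : (k:ℝ) ^ (1-p) = (k:ℝ) / (k:ℝ) ^ p := by
      rw [Real.rpow_sub hk0, Real.rpow_one]
    have hre : (k:ℝ) / (k:ℝ)^p * (∑ i ∈ s, |x i|^p) = (k:ℝ) * ((∑ i ∈ s, |x i|^p) / (k:ℝ)^p) := by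
      ring
    rw [hkp, hre]
    gcongr
  linarith

lemma abs_avgStep_le {B : ℝ} (hk : 0 < k) (hB : 0 ≤ B) (s : Finset (Fin n)) {x : Fin n → ℝ}
    (hx : ∀ i, |x i| ≤ B) : ∀ i, |avgStep k s x i| ≤ n * B := by
  intro i
  have hn1 : (1:ℝ) ≤ n := by
    have : 0 < n := i.pos
    exact_mod_cast this
  unfold avgStep
  split
  · rw [abs_div, abs_of_nonneg (by positivity : (0:ℝ) ≤ (k:ℝ))]
    have h1 : |∑ j ∈ s, x j| ≤ ∑ j ∈ s, |x j| := Finset.abs_sum_le_sum_abs _ _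
    have h2 : ∑ j ∈ s, |x j| ≤ (s.card : ℝ) * B := by
      calc ∑ j ∈ s, |x j| ≤ ∑ _j ∈ s, B := Finset.sum_le_sum fun j _ => hx j
        _ = s.card * B := by rw [Finset.sum_const, nsmul_eq_mul]
    have h3 : (s.card : ℝ) ≤ n := by
      exact_mod_cast (Finset.card_le_card (Finset.subset_univ s)).trans_eq (by simp)
    have hk1 : (1:ℝ) ≤ (k:ℝ) := by exact_mod_cast hk
    calc |∑ j ∈ s, x j| / k ≤ ((n:ℝ) * B) / k := by
          apply div_le_div_of_nonneg_right ?_ (by positivity) |>.trans_eq rfl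
          · exact h1.trans (h2.trans (by nlinarith))
      _ ≤ (n:ℝ) * B := by
          rw [div_le_iff₀ (by positivity)]
          nlinarith [mul_nonneg (mul_nonneg (le_trans zero_le_one hn1) hB) (sub_nonneg.2 hk1)]
  · nlinarith [hx i]

lemma abs_proc_le {Ω : Type*} (hk : 0 < k) (x0 : Fin n → ℝ) (hx0 : ∀ i, |x0 i| ≤ 1)
    (A : ℕ → Ω → Finset (Fin n)) (ω : Ω) (m : ℕ) :
    ∀ i, |proc k x0 A ω m i| ≤ (n:ℝ) ^ m := by
  induction m with
  | zero => simpa [proc] using hx0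
  | succ m ih =>
    intro i
    have := abs_avgStep_le hk (by positivity) (A m ω) ih i
    calc |proc k x0 A ω (m+1) i| = |avgStep k (A m ω) (proc k x0 A ω m) i| := rfl
      _ ≤ (n:ℝ) * (n:ℝ) ^ m := this
      _ = (n:ℝ) ^ (m+1) := by ring


lemma two_sub_T_le {x : Fin n → ℝ} (hx : ∀ i, 0 ≤ x i) (hsum : ∑ i, x i = 1)
    {a p : ℝ} (ha : 0 < a) (hp0 : 0 < p) (hp1 : p ≤ 1) (hn : 0 < n) :
    2 - ∑ i, |x i - 1/n| ≤ 2 * a ^ (1-p) * ∑ i, |x i| ^ p + 2 / (a * n) := by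
  classical
  set B : Finset (Fin n) := Finset.univ.filter (fun i => a ≤ x i) with hB
  have hnR : (0:ℝ) < n := by exact_mod_cast hn
  -- T lower bound
  have hsplit : ∑ i, |x i - 1/n| = ∑ i ∈ B, |x i - 1/n| + ∑ i ∈ Bᶜ, |x i - 1/n| :=
    (Finset.sum_add_sum_compl B _).symm
  have hT1 : ∑ i ∈ B, (x i - 1/n) ≤ ∑ i ∈ B, |x i - 1/n| :=
    Finset.sum_le_sum fun i _ => le_abs_self _
  have hT2 : ∑ i ∈ Bᶜ, (1/n - x i) ≤ ∑ i ∈ Bᶜ, |x i - 1/n| :=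
    Finset.sum_le_sum fun i _ => (le_abs_self _).trans_eq (abs_sub_comm _ _)
  -- arithmetic identities
  have hcard : (B.card : ℝ) + (Bᶜ.card : ℝ) = n := by
    have h := Finset.card_add_card_compl B
    rw [Fintype.card_fin] at h
    exact_mod_cast h
  have hsum_split : ∑ i ∈ B, x i + ∑ i ∈ Bᶜ, x i = 1 := by
    rw [Finset.sum_add_sum_compl B x]; exact hsum
  have hBsum : ∑ i ∈ B, (x i - 1/n) = ∑ i ∈ B, x i - B.card / n := by
    rw [Finset.sum_sub_distrib, Finset.sum_const, nsmul_eq_mul]; ring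
  have hBcsum : ∑ i ∈ Bᶜ, (1/n - x i) = (Bᶜ.card : ℝ)/n - ∑ i ∈ Bᶜ, x i := by
    rw [Finset.sum_sub_distrib, Finset.sum_const, nsmul_eq_mul]; ring
  -- card B ≤ 1/a
  have hcardB : (B.card : ℝ) * a ≤ 1 := by
    have h1 : (B.card : ℝ) * a = ∑ _i ∈ B, a := by
      rw [Finset.sum_const, nsmul_eq_mul]
    have h2 : ∑ _i ∈ B, a ≤ ∑ i ∈ B, x i := by
      refine Finset.sum_le_sum fun i hi => ?_
      exact (Finset.mem_filter.1 hi).2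
    have h3 : ∑ i ∈ B, x i ≤ 1 := by
      rw [← hsum]
      exact Finset.sum_le_sum_of_subset_of_nonneg (Finset.subset_univ B) (fun i _ _ => hx i)
    linarith
  -- small mass bound
  have hS : ∑ i ∈ Bᶜ, x i ≤ a ^ (1-p) * ∑ i, |x i| ^ p := by
    have hstep : ∀ i ∈ Bᶜ, x i ≤ a ^ (1-p) * |x i| ^ p := by
      intro i hi
      have hxa : x i < a := by
        have := Finset.mem_compl.1 hi
        simpa [hB] using lt_of_not_ge (by simpa [hB, Finset.mem_filter] using this)
      rcases eq_or_lt_of_le (hx i) with h0 | h0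
      · rw [← h0]
        simp [Real.zero_rpow hp0.ne']
      · have hxi : x i = x i ^ (1-p) * x i ^ p := by
          rw [← Real.rpow_add h0]
          norm_num
        have h1 : x i ^ (1-p) ≤ a ^ (1-p) :=
          Real.rpow_le_rpow (hx i) hxa.le (by linarith)
        have h2 : (0:ℝ) ≤ x i ^ p := Real.rpow_nonneg (hx i) p
        calc x i = x i ^ (1-p) * x i ^ p := hxi
          _ ≤ a ^ (1-p) * x i ^ p := by nlinarith
          _ = a ^ (1-p) * |x i| ^ p := by rw [abs_of_nonneg (hx i)]
    calc ∑ i ∈ Bᶜ, x i ≤ ∑ i ∈ Bᶜ, a ^ (1-p) * |x i| ^ p := Finset.sum_le_sum hstep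
      _ ≤ ∑ i, a ^ (1-p) * |x i| ^ p := by
          refine Finset.sum_le_sum_of_subset_of_nonneg (Finset.subset_univ _) fun i _ _ => ?_
          positivity
      _ = a ^ (1-p) * ∑ i, |x i| ^ p := by rw [Finset.mul_sum]
  -- combine
  have hcardB' : (B.card : ℝ) / n ≤ 1 / (a * n) := by
    rw [div_le_div_iff₀ hnR (by positivity)]
    nlinarith [mul_le_mul_of_nonneg_right hcardB hnR.le]
  have h4 : (Bᶜ.card:ℝ)/n = 1 - (B.card:ℝ)/n := by
    field_simp
    linarith
  have key : 2 - 2 * (∑ i ∈ Bᶜ, x i) - 2 * ((B.card:ℝ)/n) ≤ ∑ i, |x i - 1/n| := by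
    rw [hsplit]
    have hcompl : ∑ i ∈ B, x i = 1 - ∑ i ∈ Bᶜ, x i := by linarith
    linarith [hT1, hT2, hBsum, hBcsum]
  have h5 : 2/(a*(n:ℝ)) = 2*(1/(a*n)) := by ring
  linarith [key, hS, hcardB']


lemma measurable_proc (x0 : Fin n → ℝ) (A : ℕ → Ω → Finset (Fin n))
    (hA : ∀ m, Measurable (A m)) (m : ℕ) :
    Measurable fun ω => proc k x0 A ω m := by
  induction m with
  | zero => exact measurable_const
  | succ m ih =>
    have hproc : (fun ω => proc k x0 A ω (m+1))
        = fun ω => avgStep k (A m ω) (proc k x0 A ω m) := rfl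
    rw [hproc]
    apply measurable_pi_lambda
    intro i
    have hset : ∀ j : Fin n, MeasurableSet {ω : Ω | j ∈ A m ω} :=
      fun j => hA m (MeasurableSpace.measurableSet_top :
        MeasurableSet[⊤] {s : Finset (Fin n) | j ∈ s})
    have hcoord : ∀ j : Fin n, Measurable fun ω => proc k x0 A ω m j :=
      fun j => (measurable_pi_apply j).comp ih
    have hsum : Measurable fun ω => (∑ j ∈ A m ω, proc k x0 A ω m j) / (k:ℝ) := by
      have hrw : (fun ω => ∑ j ∈ A m ω, proc k x0 A ω m j)
          = fun ω => ∑ j : Fin n, if j ∈ A m ω then proc k x0 A ω m j else 0 := by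
        funext ω
        rw [Finset.sum_ite_mem]
        simp
      have : Measurable fun ω => ∑ j ∈ A m ω, proc k x0 A ω m j := by
        rw [hrw]
        exact Finset.measurable_sum _ fun j _ => Measurable.ite (hset j) (hcoord j) measurable_const
      exact this.div_const _
    exact Measurable.ite (hset i) hsum (hcoord i)

lemma proc_congr {Ω' : Type*} (x0 : Fin n → ℝ) (A : ℕ → Ω → Finset (Fin n))
    (A' : ℕ → Ω' → Finset (Fin n)) (ω : Ω) (ω' : Ω') (m : ℕ)
    (h : ∀ j < m, A j ω = A' j ω') : proc k x0 A ω m = proc k x0 A' ω' m := by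
  induction m with
  | zero => rfl
  | succ m ih =>
    have h1 : proc k x0 A ω (m+1) = avgStep k (A m ω) (proc k x0 A ω m) := rfl
    have h2 : proc k x0 A' ω' (m+1) = avgStep k (A' m ω') (proc k x0 A' ω' m) := rfl
    rw [h1, h2, h m (Nat.lt_succ_self m), ih fun j hj => h j (hj.trans (Nat.lt_succ_self m))]

lemma count_subsets (hk : 0 < k) (i : Fin n) :
    (Finset.univ.filter fun s : Finset (Fin n) => i ∈ s ∧ s.card = k).card
      = (n-1).choose (k-1) := by
  classical
  have := Finset.card_powersetCard (k-1) (Finset.univ.erase i)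
  rw [Finset.card_erase_of_mem (Finset.mem_univ i), Finset.card_univ, Fintype.card_fin] at this
  rw [← this]
  refine Finset.card_bij' (fun s _ => s.erase i) (fun t _ => insert i t) ?hi ?hj ?li ?ri
  case hi =>
    intro s hs
    simp only [Finset.mem_filter, Finset.mem_univ, true_and] at hs
    rw [Finset.mem_powersetCard]
    constructor
    · intro j hj
      rw [Finset.mem_erase] at hj ⊢
      exact ⟨hj.1, Finset.mem_univ _⟩
    · rw [Finset.card_erase_of_mem hs.1, hs.2]
  case hj =>
    intro t ht
    rw [Finset.mem_powersetCard] at ht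
    have hit : i ∉ t := fun hmem => by
      have := ht.1 hmem
      simp at this
    simp only [Finset.mem_filter, Finset.mem_univ, true_and]
    refine ⟨Finset.mem_insert_self _ _, ?_⟩
    rw [Finset.card_insert_of_notMem hit, ht.2]
    omega
  case li =>
    intro s hs
    simp only [Finset.mem_filter, Finset.mem_univ, true_and] at hs
    exact Finset.insert_erase hs.1
  case ri =>
    intro t ht
    rw [Finset.mem_powersetCard] at ht
    have hit : i ∉ t := fun hmem => by
      have := ht.1 hmem
      simp at this
    exact Finset.erase_insert hit


section
variable (μ : Measure Ω) [IsProbabilityMeasure μ] (A : ℕ → Ω → Finset (Fin n))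


lemma integrable_of_bound (f : Ω → ℝ) (hf : Measurable f) (C : ℝ) (h : ∀ ω, |f ω| ≤ C) :
    Integrable f μ := by
  refine (integrable_const C).mono' hf.aestronglyMeasurable ?_
  filter_upwards with ω
  simpa [Real.norm_eq_abs] using h ω

lemma ae_card (hk : 0 < k)
    (hunif : ∀ (m : ℕ) (s : Finset (Fin n)),
      μ (A m ⁻¹' {s}) = if s.card = k then ((n.choose k : ENNReal))⁻¹ else 0)
    (m : ℕ) : ∀ᵐ ω ∂μ, (A m ω).card = k := by
  rw [ae_iff]
  have hset : {ω | ¬ (A m ω).card = k}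
      = ⋃ s ∈ {s : Finset (Fin n) | s.card ≠ k}, A m ⁻¹' {s} := by
    ext ω; simp [eq_comm]
  rw [hset]
  refine (measure_biUnion_null_iff (Set.to_countable _)).2 fun s hs => ?_
  rw [hunif m s, if_neg hs]

lemma integral_indicator_mem (hk : 0 < k) (hkn : k < n) (hA : ∀ m, Measurable (A m))
    (hunif : ∀ (m : ℕ) (s : Finset (Fin n)),
      μ (A m ⁻¹' {s}) = if s.card = k then ((n.choose k : ENNReal))⁻¹ else 0)
    (m : ℕ) (i : Fin n) :
    ∫ ω, (if i ∈ A m ω then (1:ℝ) else 0) ∂μ = k / n := by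
  classical
  have hSmeas : MeasurableSet {ω : Ω | i ∈ A m ω} :=
    hA m (MeasurableSpace.measurableSet_top : MeasurableSet[⊤] {s : Finset (Fin n) | i ∈ s})
  have h1 : (fun ω => (if i ∈ A m ω then (1:ℝ) else 0))
      = fun ω => Set.indicator {ω : Ω | i ∈ A m ω} 1 ω := by
    funext ω
    rw [Set.indicator_apply]
    simp
  rw [h1, integral_indicator_one hSmeas]
  -- compute the measure
  have hset : {ω : Ω | i ∈ A m ω}
      = ⋃ s ∈ ((Finset.univ.filter fun s : Finset (Fin n) => i ∈ s) : Finset _),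
          A m ⁻¹' {s} := by
    ext ω; simp [eq_comm]
  have hdisj : Set.PairwiseDisjoint
      (((Finset.univ.filter fun s : Finset (Fin n) => i ∈ s) : Finset _) : Set (Finset (Fin n)))
      (fun s => A m ⁻¹' {s}) := by
    intro s _ t _ hst
    refine Set.disjoint_left.2 fun ω h1 h2 => hst ?_
    simp only [Set.mem_preimage, Set.mem_singleton_iff] at h1 h2
    rw [← h1, ← h2]
  rw [hset, measureReal_def, measure_biUnion_finset hdisj (fun s _ => hA m (measurableSet_singleton s))]
  have hcongr : ∀ s ∈ (Finset.univ.filter fun s : Finset (Fin n) => i ∈ s),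
      μ (A m ⁻¹' {s}) = if s.card = k then ((n.choose k : ENNReal))⁻¹ else 0 :=
    fun s _ => hunif m s
  rw [Finset.sum_congr rfl hcongr, ← Finset.sum_filter, Finset.filter_filter,
    Finset.sum_const, count_subsets hk i]
  have hC : 0 < n.choose k := Nat.choose_pos hkn.le
  rw [nsmul_eq_mul, ENNReal.toReal_mul, ENNReal.toReal_inv]
  rw [ENNReal.toReal_natCast, ENNReal.toReal_natCast]
  -- the combinatorial identity
  have hid : n * ((n-1).choose (k-1)) = n.choose k * k := by
    have h := Nat.add_one_mul_choose_eq (n-1) (k-1)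
    have hn1 : n - 1 + 1 = n := Nat.succ_pred_eq_of_pos (hk.trans hkn)
    have hk1 : k - 1 + 1 = k := Nat.succ_pred_eq_of_pos hk
    rw [hn1, hk1] at h
    exact h
  have hCne : ((n.choose k : ℝ)) ≠ 0 := Nat.cast_ne_zero.2 hC.ne'
  have hnne : ((n:ℝ)) ≠ 0 := Nat.cast_ne_zero.2 (hk.trans hkn).ne'
  have hidR : (n:ℝ) * ((n-1).choose (k-1) : ℝ) = (n.choose k : ℝ) * k := by
    exact_mod_cast hid
  field_simp
  nlinarith [hidR]

lemma indep_proc (hind : iIndepFun A μ)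
    (hA : ∀ m, Measurable (A m)) (x0 : Fin n → ℝ) (m : ℕ) :
    IndepFun (fun ω => proc k x0 A ω m) (A m) μ := by
  have h := hind.indepFun_finset (Finset.range m) {m} (by simp) hA
  set g : ((i : (Finset.range m : Finset ℕ)) → Finset (Fin n)) → (Fin n → ℝ) :=
    fun t => proc k x0
      (fun j (_ : Unit) => if h : j ∈ Finset.range m then t ⟨j, h⟩ else ∅) () m with hgdef
  set prj : ((i : ({m} : Finset ℕ)) → Finset (Fin n)) → Finset (Fin n) :=
    fun t => t ⟨m, Finset.mem_singleton_self m⟩ with hprjdef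
  have hg : Measurable g := measurable_of_countable _
  have hprj : Measurable prj := measurable_pi_apply _
  have h2 := h.comp hg hprj
  have e1 : (g ∘ fun ω (i : (Finset.range m : Finset ℕ)) => A i ω)
      = fun ω => proc k x0 A ω m := by
    funext ω
    refine proc_congr x0 _ A () ω m fun j hj => ?_
    simp only [hgdef]
    rw [dif_pos (Finset.mem_range.2 hj)]
  have e2 : (prj ∘ fun ω (i : ({m} : Finset ℕ)) => A i ω) = A m := rfl
  rw [e1, e2] at h2
  exact h2

lemma integral_phi_le [IsProbabilityMeasure μ] (hk : 0 < k) (hkn : k < n)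
    (hA : ∀ m, Measurable (A m))
    (hind : iIndepFun A μ)
    (hunif : ∀ (m : ℕ) (s : Finset (Fin n)),
      μ (A m ⁻¹' {s}) = if s.card = k then ((n.choose k : ENNReal))⁻¹ else 0)
    (x0 : Fin n → ℝ) (hx0 : ∀ i, |x0 i| ≤ 1)
    {p : ℝ} (hp0 : 0 < p) (hp1 : p ≤ 1)
    (hphi0 : ∑ i, |x0 i| ^ p ≤ 1) (m : ℕ) :
    ∫ ω, (∑ i, |proc k x0 A ω m i| ^ p) ∂μ
      ≤ (1 + ((k:ℝ) ^ (1-p) - 1) * (k / n)) ^ m := by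
  have hn0 : 0 < n := hk.trans hkn
  set c : ℝ := (k:ℝ) ^ (1-p) - 1 with hc
  have hcoeff : (0:ℝ) ≤ c := by
    have h1 : (1:ℝ) ≤ (k:ℝ) := by exact_mod_cast hk
    have := Real.one_le_rpow h1 (by linarith : (0:ℝ) ≤ 1 - p)
    simp only [hc]; linarith
  have hkn' : (0:ℝ) ≤ (k:ℝ)/n := by positivity
  -- measurability / integrability infrastructure
  have hXmeas : ∀ m, Measurable fun ω => proc k x0 A ω m := measurable_proc x0 A hA
  have hfim : ∀ m (i : Fin n), Measurable fun ω => |proc k x0 A ω m i| ^ p := fun m i =>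
    (Real.continuous_rpow_const hp0.le).measurable.comp
      ((measurable_pi_apply i).comp (hXmeas m)).abs
  have hfib : ∀ m (i : Fin n) (ω : Ω), |proc k x0 A ω m i| ^ p ≤ ((n:ℝ)^m)^p := fun m i ω =>
    Real.rpow_le_rpow (abs_nonneg _) (abs_proc_le hk x0 hx0 A ω m i) hp0.le
  have hfint : ∀ m (i : Fin n), Integrable (fun ω => |proc k x0 A ω m i| ^ p) μ := by
    intro m i
    refine integrable_of_bound μ _ (hfim m i) (((n:ℝ)^m)^p) fun ω => ?_
    rw [abs_of_nonneg (Real.rpow_nonneg (abs_nonneg _) p)]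
    exact hfib m i ω
  have hPhimeas : ∀ m, Measurable fun ω => ∑ i, |proc k x0 A ω m i| ^ p :=
    fun m => Finset.measurable_sum _ fun i _ => hfim m i
  have hPhiint : ∀ m, Integrable (fun ω => ∑ i, |proc k x0 A ω m i| ^ p) μ :=
    fun m => integrable_finset_sum _ fun i _ => hfint m i
  induction m with
  | zero =>
    have : (fun ω : Ω => ∑ i, |proc k x0 A ω 0 i| ^ p) = fun _ => ∑ i, |x0 i| ^ p := rfl
    rw [this, integral_const]
    simpa using hphi0
  | succ m ih =>
    have hgim' : ∀ (i : Fin n), Measurable fun ω => (if i ∈ A m ω then (1:ℝ) else 0) := by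
      intro i
      exact (measurable_of_countable
        (fun s : Finset (Fin n) => if i ∈ s then (1:ℝ) else 0)).comp (hA m)
    have hprodint : ∀ i : Fin n,
        Integrable (fun ω => (|proc k x0 A ω m i| ^ p) * (if i ∈ A m ω then 1 else 0)) μ := by
      intro i
      refine integrable_of_bound μ _ ((hfim m i).mul (hgim' i)) (((n:ℝ)^m)^p) fun ω => ?_
      rw [abs_mul]
      have h1 := hfib m i ω
      have h2 : |(if i ∈ A m ω then (1:ℝ) else 0)| ≤ 1 := by split <;> simp
      have h3 : (0:ℝ) ≤ |proc k x0 A ω m i| ^ p := Real.rpow_nonneg (abs_nonneg _) p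
      calc |(|proc k x0 A ω m i| ^ p)| * |(if i ∈ A m ω then (1:ℝ) else 0)|
          ≤ |(|proc k x0 A ω m i| ^ p)| * 1 := by
            apply mul_le_mul_of_nonneg_left h2 (abs_nonneg _)
        _ = |proc k x0 A ω m i| ^ p := by rw [mul_one, abs_of_nonneg h3]
        _ ≤ ((n:ℝ)^m)^p := h1
    have hψint : Integrable
        (fun ω => ∑ i, (|proc k x0 A ω m i| ^ p) * (if i ∈ A m ω then 1 else 0)) μ :=
      integrable_finset_sum _ fun i _ => hprodint i
    -- pointwise a.e. step inequality
    have key : ∫ ω, (∑ i, |proc k x0 A ω (m+1) i| ^ p) ∂μ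
        ≤ ∫ ω, ((∑ i, |proc k x0 A ω m i| ^ p)
            + c * ∑ i, (|proc k x0 A ω m i| ^ p) * (if i ∈ A m ω then 1 else 0)) ∂μ := by
      refine integral_mono_ae (hPhiint (m+1)) ((hPhiint m).add (hψint.const_mul c)) ?_
      filter_upwards [ae_card μ A hk hunif m] with ω hcard
      have hsum_eq : ∑ i, (|proc k x0 A ω m i| ^ p) * (if i ∈ A m ω then 1 else 0)
          = ∑ i ∈ A m ω, |proc k x0 A ω m i| ^ p := by
        simp only [mul_ite, mul_one, mul_zero]
        rw [Finset.sum_ite_mem, Finset.univ_inter]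
      have hps := phi_step hk hcard (proc k x0 A ω m) hp0 hp1
      calc ∑ i, |proc k x0 A ω (m+1) i| ^ p
          = ∑ i, |avgStep k (A m ω) (proc k x0 A ω m) i| ^ p := rfl
        _ ≤ ∑ i, |proc k x0 A ω m i| ^ p + c * ∑ i ∈ A m ω, |proc k x0 A ω m i| ^ p := hps
        _ = _ := by rw [hsum_eq]
    rw [integral_add (hPhiint m) (hψint.const_mul c), integral_const_mul] at key
    -- evaluate ∫ ψ
    have hψval : ∫ ω, (∑ i, (|proc k x0 A ω m i| ^ p) * (if i ∈ A m ω then 1 else 0)) ∂μ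
        = ((k:ℝ)/n) * ∫ ω, (∑ i, |proc k x0 A ω m i| ^ p) ∂μ := by
      rw [integral_finset_sum _ fun i _ => hprodint i,
        integral_finset_sum _ fun i _ => hfint m i, Finset.mul_sum]
      refine Finset.sum_congr rfl fun i _ => ?_
      have hiid : IndepFun (fun ω => |proc k x0 A ω m i| ^ p)
          (fun ω => if i ∈ A m ω then (1:ℝ) else 0) μ := by
        have h := indep_proc (k := k) μ A hind hA x0 m
        exact h.comp
          ((Real.continuous_rpow_const hp0.le).measurable.comp (measurable_pi_apply i).abs)
          (measurable_of_countable (fun s : Finset (Fin n) => if i ∈ s then (1:ℝ) else 0))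
      have := hiid.integral_mul_eq_mul_integral (hfim m i).aestronglyMeasurable (hgim' i).aestronglyMeasurable
      have hmul : ∫ ω, (|proc k x0 A ω m i| ^ p) * (if i ∈ A m ω then 1 else 0) ∂μ
          = (∫ ω, |proc k x0 A ω m i| ^ p ∂μ) * ∫ ω, (if i ∈ A m ω then (1:ℝ) else 0) ∂μ := this
      rw [hmul, integral_indicator_mem μ A hk hkn hA hunif m i]
      ring
    rw [hψval] at key
    have hnn : 0 ≤ ∫ ω, (∑ i, |proc k x0 A ω m i| ^ p) ∂μ :=
      integral_nonneg fun ω => Finset.sum_nonneg fun i _ => Real.rpow_nonneg (abs_nonneg _) p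
    have hrpos : (0:ℝ) ≤ 1 + c * ((k:ℝ)/n) := by positivity
    calc ∫ ω, (∑ i, |proc k x0 A ω (m+1) i| ^ p) ∂μ
        ≤ (1 + c * ((k:ℝ)/n)) * ∫ ω, (∑ i, |proc k x0 A ω m i| ^ p) ∂μ := by linarith
      _ ≤ (1 + c * ((k:ℝ)/n)) * (1 + c * ((k:ℝ)/n)) ^ m := by
          exact mul_le_mul_of_nonneg_left ih hrpos
      _ = (1 + c * ((k:ℝ)/n)) ^ (m+1) := by ring

end


-- new: nonneg and sum of proc on the good event
lemma proc_nonneg_sum (hk : 0 < k) (x0 : Fin n → ℝ) (hx0 : ∀ i, 0 ≤ x0 i)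
    (hs0 : ∑ i, x0 i = 1) (A : ℕ → Ω → Finset (Fin n)) (ω : Ω)
    (hcard : ∀ j, (A j ω).card = k) (m : ℕ) :
    (∀ i, 0 ≤ proc k x0 A ω m i) ∧ ∑ i, proc k x0 A ω m i = 1 := by
  induction m with
  | zero => exact ⟨hx0, hs0⟩
  | succ m ih =>
    constructor
    · exact avgStep_nonneg hk (A m ω) ih.1
    · rw [show (fun i => proc k x0 A ω (m+1) i) = avgStep k (A m ω) (proc k x0 A ω m) from rfl,
        sum_avgStep hk (hcard m), ih.2]

-- exp-type inequalities
lemma rpow_sub_one_le (t : ℝ) (ht : 0 ≤ t) : Real.exp t - 1 ≤ t * Real.exp t := by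
  have h := Real.add_one_le_exp (-t)
  have he : 0 < Real.exp t := Real.exp_pos t
  have h2 : Real.exp (-t) = (Real.exp t)⁻¹ := Real.exp_neg t
  rw [h2] at h
  have := mul_le_mul_of_nonneg_right h he.le
  rw [inv_mul_cancel₀ he.ne'] at this
  nlinarith

end AvgAux

open AvgAux in
lemma avgDivHelper (a N eps : ℝ) (hN : 0 < N) (he : 0 < eps) :
    a / (eps/4 * N) = (4/eps) * (a / N) := by
  field_simp

open AvgAux in
/-- For `θ < 1/(k log k)`, the `L¹` distance `T_n(⌊θ n log n⌋)` of the `k`-averaging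
process started from `(1,0,…,0)` converges to `2` in probability as `n → ∞`. -/
theorem averaging_L1_lower_cutoff
    (k : ℕ) (hk : 2 ≤ k)
    (Ω : ℕ → Type*) [∀ n, MeasurableSpace (Ω n)]
    (μ : ∀ n, Measure (Ω n)) [∀ n, IsProbabilityMeasure (μ n)]
    (A : ∀ n, ℕ → Ω n → Finset (Fin n))
    (hmeas : ∀ n, k < n → ∀ m, Measurable (A n m))
    (hindep : ∀ n, k < n → iIndepFun (A n) (μ n))
    (hunif : ∀ n, k < n → ∀ (m : ℕ) (s : Finset (Fin n)),
      μ n (A n m ⁻¹' {s}) = if s.card = k then ((n.choose k : ENNReal))⁻¹ else 0)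
    (θ : ℝ) (hθ0 : 0 < θ) (hθ : θ < 1 / (k * Real.log k)) :
    ∀ ε > 0, Tendsto
      (fun n => μ n {ω |
        ε ≤ |(∑ i, |proc k (fun i : Fin n => if i.val = 0 then (1 : ℝ) else 0) (A n) ω
                (⌊θ * n * Real.log n⌋₊) i - 1 / n|) - 2|})
      atTop (nhds 0) := by
  intro ε hε
  -- basic constants
  have hk0 : 0 < k := by omega
  have hk1R : (1:ℝ) < (k:ℝ) := by exact_mod_cast by omega
  have hlogk : 0 < Real.log k := Real.log_pos hk1R
  set c : ℝ := θ * ((k:ℝ) * Real.log k) with hcdef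
  have hc0 : 0 < c := by positivity
  have hc1 : c < 1 := by
    have hkl : (0:ℝ) < (k:ℝ) * Real.log k := by positivity
    rw [hcdef]
    calc θ * ((k:ℝ) * Real.log k) < (1 / ((k:ℝ) * Real.log k)) * ((k:ℝ) * Real.log k) := by
          exact mul_lt_mul_of_pos_right hθ hkl
      _ = 1 := by field_simp
  set γ : ℝ := (1 + c)/2 with hγdef
  have hγc : c < γ := by rw [hγdef]; linarith
  have hγ1 : γ < 1 := by rw [hγdef]; linarith
  have hγ0 : 0 < γ := by rw [hγdef]; linarith
  set q : ℝ := min (Real.log (γ/c) / Real.log k / 2) (1/2) with hqdef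
  have hγc1 : 1 < γ/c := (one_lt_div hc0).2 hγc
  have hlogγc : 0 < Real.log (γ/c) := Real.log_pos hγc1
  have hq0 : 0 < q := by
    rw [hqdef]
    apply lt_min
    · positivity
    · norm_num
  have hq2 : q ≤ 1/2 := min_le_right _ _
  set p : ℝ := 1 - q with hpdef
  have hp0 : 0 < p := by rw [hpdef]; linarith
  have hp1 : p ≤ 1 := by rw [hpdef]; linarith
  have h1p : 1 - p = q := by rw [hpdef]; ring
  have hkq : (k:ℝ) ^ q < γ / c := by
    have hqlt : q < Real.log (γ/c) / Real.log k := by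
      have h1 : q ≤ Real.log (γ/c) / Real.log k / 2 := min_le_left _ _
      have h2 : 0 < Real.log (γ/c) / Real.log k := by positivity
      linarith
    have hql : q * Real.log k < Real.log (γ/c) := (lt_div_iff₀ hlogk).1 hqlt
    have hkpos : (0:ℝ) < (k:ℝ) := by positivity
    rw [Real.rpow_def_of_pos hkpos]
    calc Real.exp (Real.log (k:ℝ) * q) = Real.exp (q * Real.log k) := by rw [mul_comm]
      _ < Real.exp (Real.log (γ/c)) := Real.exp_lt_exp.2 hql
      _ = γ / c := Real.exp_log (by positivity)
  set d : ℝ := θ * (k:ℝ) * ((k:ℝ) ^ q - 1) with hddef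
  have hkq1 : (1:ℝ) ≤ (k:ℝ) ^ q := Real.one_le_rpow hk1R.le hq0.le
  have hd0 : 0 ≤ d := by rw [hddef]; nlinarith
  have hdlt : d < γ * q := by
    -- k^q - 1 ≤ q log k * k^q
    have hexp : (k:ℝ) ^ q = Real.exp (q * Real.log k) := by
      rw [Real.rpow_def_of_pos (by positivity), mul_comm]
    have h2 : (k:ℝ) ^ q - 1 ≤ (q * Real.log k) * (k:ℝ) ^ q := by
      rw [hexp]
      exact rpow_sub_one_le _ (by positivity)
    have h3 : d ≤ q * c * (k:ℝ) ^ q := by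
      rw [hddef, hcdef]
      nlinarith
    have h4 : q * c * ((k:ℝ) ^ q) < q * c * (γ/c) := by
      apply mul_lt_mul_of_pos_left hkq (by positivity)
    have h5 : q * c * (γ/c) = γ * q := by field_simp
    linarith
  have hδ : 0 < γ * q - d := by linarith
  -- the bounding sequence
  have hgbound : Tendsto (fun n : ℕ => ENNReal.ofReal ((4/ε) * (n:ℝ) ^ (d - γ*q)))
      atTop (nhds 0) := by
    have h1 : Tendsto (fun x : ℝ => x ^ (-(γ*q - d))) atTop (nhds 0) :=
      tendsto_rpow_neg_atTop hδ
    have h2 : Tendsto (fun n : ℕ => ((n:ℝ)) ^ (d - γ*q)) atTop (nhds 0) := by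
      have heq : (fun n : ℕ => ((n:ℝ)) ^ (d - γ*q))
          = (fun x : ℝ => x ^ (-(γ*q - d))) ∘ (fun n : ℕ => (n:ℝ)) := by
        funext n
        simp only [Function.comp_apply, neg_sub]
      rw [heq]
      exact h1.comp tendsto_natCast_atTop_atTop
    have h3 : Tendsto (fun n : ℕ => (4/ε) * (n:ℝ) ^ (d - γ*q)) atTop (nhds 0) := by
      have := h2.const_mul (4/ε)
      simpa using this
    have h4 := (ENNReal.continuous_ofReal.tendsto 0).comp h3
    simpa [Function.comp_def] using h4
  -- the eventual inequality
  have hev2 : ∀ᶠ n : ℕ in atTop, 2 * (n:ℝ) ^ (γ - 1) ≤ ε/2 := by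
    have h1 : Tendsto (fun x : ℝ => x ^ (-(1 - γ))) atTop (nhds 0) :=
      tendsto_rpow_neg_atTop (by linarith)
    have h2 : Tendsto (fun n : ℕ => 2 * (n:ℝ) ^ (γ - 1)) atTop (nhds 0) := by
      have heq : (fun n : ℕ => ((n:ℝ)) ^ (γ - 1))
          = (fun x : ℝ => x ^ (-(1 - γ))) ∘ (fun n : ℕ => (n:ℝ)) := by
        funext n
        simp only [Function.comp_apply, neg_sub]
      have h2' := ((show Tendsto (fun n : ℕ => ((n:ℝ)) ^ (γ - 1)) atTop (nhds 0) by
        rw [heq]; exact h1.comp tendsto_natCast_atTop_atTop).const_mul (2:ℝ))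
      simpa using h2'
    exact h2.eventually (eventually_le_nhds (by positivity))
  refine tendsto_of_tendsto_of_tendsto_of_le_of_le' tendsto_const_nhds hgbound
    (Eventually.of_forall fun n => zero_le) ?_
  filter_upwards [eventually_gt_atTop k, hev2] with n hn hev2n
  -- now fixed n
  have hkn : k < n := hn
  have hn0 : 0 < n := hk0.trans hkn
  have hn0R : (0:ℝ) < (n:ℝ) := by exact_mod_cast hn0
  set x0 : Fin n → ℝ := fun i => if i.val = 0 then (1:ℝ) else 0 with hx0def
  set m : ℕ := ⌊θ * n * Real.log n⌋₊ with hmdef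
  have hx0abs : ∀ i, |x0 i| ≤ 1 := by
    intro i
    rw [hx0def]
    dsimp only
    split <;> simp
  have hx0nn : ∀ i, 0 ≤ x0 i := by
    intro i
    rw [hx0def]
    dsimp only
    split <;> norm_num
  have hx0sum : ∑ i, x0 i = 1 := by
    rw [hx0def]
    have hiff : ∀ i : Fin n, (if (i:ℕ) = 0 then (1:ℝ) else 0)
        = if i = (⟨0, hn0⟩ : Fin n) then 1 else 0 := by
      intro i
      congr 1
      simp [Fin.ext_iff]
    rw [Finset.sum_congr rfl (fun i _ => hiff i), Finset.sum_ite_eq' Finset.univ]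
    simp
  have hphi0 : ∑ i, |x0 i| ^ p ≤ 1 := by
    have hpe : ∀ i : Fin n, |x0 i| ^ p = x0 i := by
      intro i
      rw [hx0def]
      dsimp only
      split
      · simp
      · simp [Real.zero_rpow hp0.ne']
    rw [Finset.sum_congr rfl (fun i _ => hpe i), hx0sum]
  have hEΦ := integral_phi_le (μ n) (A n) hk0 hkn (hmeas n hkn) (hindep n hkn) (hunif n hkn)
      x0 hx0abs hp0 hp1 hphi0 m
  rw [h1p] at hEΦ
  -- r^m ≤ n^d
  have hrexp : (1 + ((k:ℝ)^q - 1) * ((k:ℝ)/(n:ℝ))) ^ m ≤ (n:ℝ) ^ d := by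
    set δn : ℝ := ((k:ℝ)^q - 1) * ((k:ℝ)/(n:ℝ)) with hδndef
    have hδn0 : 0 ≤ δn := by
      have h1 : (0:ℝ) ≤ (k:ℝ)^q - 1 := by linarith
      have h2 : (0:ℝ) ≤ (k:ℝ)/(n:ℝ) := by positivity
      exact mul_nonneg h1 h2
    have h1 : (1 + δn) ^ m ≤ Real.exp ((m:ℝ) * δn) := by
      have he := Real.add_one_le_exp δn
      calc (1 + δn)^m ≤ (Real.exp δn)^m := pow_le_pow_left₀ (by linarith) (by linarith) m
        _ = Real.exp ((m:ℝ) * δn) := by rw [← Real.exp_nat_mul]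
    have hn1R : (1:ℝ) ≤ (n:ℝ) := by exact_mod_cast hn0
    have hlogn : 0 ≤ Real.log n := Real.log_nonneg hn1R
    have hm_le : (m:ℝ) ≤ θ * n * Real.log n := by
      rw [hmdef]
      exact Nat.floor_le (by positivity)
    have h2 : (m:ℝ) * δn ≤ d * Real.log n := by
      have h3 : (m:ℝ) * δn ≤ (θ * n * Real.log n) * δn := mul_le_mul_of_nonneg_right hm_le hδn0
      have h4 : (θ * (n:ℝ) * Real.log n) * δn = d * Real.log n := by
        rw [hδndef, hddef]
        field_simp
      linarith
    have h3 : Real.exp ((m:ℝ)*δn) ≤ Real.exp (d * Real.log n) := Real.exp_le_exp.2 h2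
    have h4 : Real.exp (d * Real.log n) = (n:ℝ)^d := by
      rw [Real.rpow_def_of_pos hn0R, mul_comm]
    linarith
  -- Markov
  set Φ : Ω n → ℝ := fun ω => ∑ i, |proc k x0 (A n) ω m i| ^ p with hΦdef
  have hΦnn : ∀ ω, 0 ≤ Φ ω := fun ω =>
    Finset.sum_nonneg fun i _ => Real.rpow_nonneg (abs_nonneg _) p
  have hΦmeas : Measurable Φ := by
    rw [hΦdef]
    exact Finset.measurable_sum _ fun i _ =>
      (Real.continuous_rpow_const hp0.le).measurable.comp
        ((measurable_pi_apply i).comp (measurable_proc x0 (A n) (hmeas n hkn) m)).abs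
  have hΦint : Integrable Φ (μ n) := by
    refine integrable_of_bound (μ n) Φ hΦmeas ((n:ℝ) * ((n:ℝ)^m)^p) fun ω => ?_
    rw [abs_of_nonneg (hΦnn ω), hΦdef]
    calc ∑ i, |proc k x0 (A n) ω m i| ^ p ≤ ∑ _i : Fin n, ((n:ℝ)^m)^p :=
          Finset.sum_le_sum fun i _ => Real.rpow_le_rpow (abs_nonneg _)
            (abs_proc_le hk0 x0 hx0abs (A n) ω m i) hp0.le
      _ = (n:ℝ) * ((n:ℝ)^m)^p := by
          rw [Finset.sum_const, Finset.card_univ, Fintype.card_fin, nsmul_eq_mul]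
  set t : ℝ := (ε/4) * (n:ℝ)^(γ*q) with htdef
  have hrp : (0:ℝ) < (n:ℝ)^(γ*q) := Real.rpow_pos_of_pos hn0R _
  have ht0 : 0 < t := by rw [htdef]; positivity
  have hmarkov := mul_meas_ge_le_integral_of_nonneg (μ := μ n) (f := Φ)
      (Eventually.of_forall hΦnn) hΦint t
  have hae : ∀ᵐ ω ∂ μ n, ∀ j, (A n j ω).card = k :=
    ae_all_iff.2 fun j => ae_card (μ n) (A n) hk0 (hunif n hkn) j
  have hsub : μ n {ω | ε ≤ |(∑ i, |proc k x0 (A n) ω m i - 1/(n:ℝ)|) - 2|}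
      ≤ μ n {ω | t ≤ Φ ω} := by
    apply measure_mono_ae
    filter_upwards [hae] with ω hcard hmem
    show t ≤ Φ ω
    replace hmem : ε ≤ |(∑ i, |proc k x0 (A n) ω m i - 1/(n:ℝ)|) - 2| := hmem
    obtain ⟨hnn, hsum1⟩ := proc_nonneg_sum hk0 x0 hx0nn hx0sum (A n) ω hcard m
    have hTle2 : ∑ i, |proc k x0 (A n) ω m i - 1/(n:ℝ)| ≤ 2 := by
      calc ∑ i, |proc k x0 (A n) ω m i - 1/(n:ℝ)|
          ≤ ∑ i, (proc k x0 (A n) ω m i + 1/(n:ℝ)) := by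
            refine Finset.sum_le_sum fun i _ => ?_
            rw [sub_eq_add_neg]
            refine (abs_add_le _ _).trans ?_
            rw [abs_neg, abs_of_nonneg (hnn i), abs_of_nonneg (by positivity : (0:ℝ) ≤ 1/(n:ℝ))]
        _ = 1 + (n:ℝ) * (1/(n:ℝ)) := by
            rw [Finset.sum_add_distrib, hsum1, Finset.sum_const, Finset.card_univ,
              Fintype.card_fin, nsmul_eq_mul]
        _ = 2 := by
            rw [mul_one_div, div_self hn0R.ne']
            norm_num
    have hmem' : ε ≤ 2 - ∑ i, |proc k x0 (A n) ω m i - 1/(n:ℝ)| := by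
      have habs : |(∑ i, |proc k x0 (A n) ω m i - 1/(n:ℝ)|) - 2|
          = 2 - ∑ i, |proc k x0 (A n) ω m i - 1/(n:ℝ)| := by
        rw [abs_of_nonpos (by linarith)]
        ring
      rw [habs] at hmem
      exact hmem
    have ha : (0:ℝ) < (n:ℝ)^(-γ) := Real.rpow_pos_of_pos hn0R _
    have hdet := two_sub_T_le hnn hsum1 ha hp0 hp1 hn0
    rw [h1p] at hdet
    have e1 : ((n:ℝ)^(-γ))^q = (n:ℝ)^(-(γ*q)) := by
      rw [← Real.rpow_mul hn0R.le, neg_mul]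
    have e2 : 2 / ((n:ℝ)^(-γ) * (n:ℝ)) = 2 * (n:ℝ)^(γ-1) := by
      have h1 : (n:ℝ)^(-γ) * (n:ℝ) = (n:ℝ)^(1-γ) := by
        rw [Real.rpow_sub hn0R, Real.rpow_one]
        rw [Real.rpow_neg hn0R.le]
        field_simp
      have h2 : (n:ℝ)^(γ-1) = ((n:ℝ)^(1-γ))⁻¹ := by
        rw [show γ-1 = -(1-γ) by ring, Real.rpow_neg hn0R.le]
      rw [h1, h2]
      ring
    rw [e1, e2] at hdet
    -- so ε ≤ 2 n^{-(γq)} Φ ω + ε/2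
    have hΦω : ε/2 ≤ 2 * (n:ℝ)^(-(γ*q)) * Φ ω := by
      have : ε ≤ 2 * (n:ℝ)^(-(γ*q)) * Φ ω + 2 * (n:ℝ)^(γ-1) := by
        refine le_trans hmem' (le_trans hdet ?_)
        rw [hΦdef]
      linarith
    have hmul : (n:ℝ)^(-(γ*q)) * (n:ℝ)^(γ*q) = 1 := by
      rw [← Real.rpow_add hn0R]
      simp
    have h10 : (ε/2) * (n:ℝ)^(γ*q) ≤ 2 * Φ ω := by
      have h11 := mul_le_mul_of_nonneg_right hΦω hrp.le
      calc (ε/2) * (n:ℝ)^(γ*q) ≤ 2 * (n:ℝ)^(-(γ*q)) * Φ ω * (n:ℝ)^(γ*q) := h11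
        _ = 2 * Φ ω * ((n:ℝ)^(-(γ*q)) * (n:ℝ)^(γ*q)) := by ring
        _ = 2 * Φ ω := by rw [hmul, mul_one]
    rw [htdef]
    linarith
  refine le_trans hsub ?_
  have h6 : ((μ n) {ω | t ≤ Φ ω}).toReal ≤ (4/ε) * (n:ℝ)^(d-γ*q) := by
    have h7 : t * ((μ n) {ω | t ≤ Φ ω}).toReal ≤ (n:ℝ)^d := le_trans hmarkov (hEΦ.trans hrexp)
    have h8 : ((μ n) {ω | t ≤ Φ ω}).toReal ≤ (n:ℝ)^d / t := by
      rw [le_div_iff₀ ht0]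
      linarith
    have h9 : (n:ℝ)^d / t = (4/ε) * (n:ℝ)^(d-γ*q) := by
      rw [htdef, Real.rpow_sub hn0R]
      exact avgDivHelper _ _ _ hrp hε
    linarith
  calc (μ n) {ω | t ≤ Φ ω} = ENNReal.ofReal (((μ n) {ω | t ≤ Φ ω}).toReal) :=
        (ENNReal.ofReal_toReal (measure_ne_top _ _)).symm
    _ ≤ ENNReal.ofReal ((4/ε) * (n:ℝ)^(d-γ*q)) := ENNReal.ofReal_le_ofReal h6



end
end

section
/- Let k ≥ 2 be a fixed integer. For each n > k, let (x^{(n)}_m)_{m≥0} be the k-averaging process on ℝ^n started from the initial vector x_0 = (1, 0, …, 0), and set T_n(m) = ∑_{i=1}^n |x^{(n)}_{m,i} − 1/n|. Then for any fixed real number θ with θ > 1/(k−1), the random variables T_n(⌊θ n log n⌋) converge to 0 in probability as n → ∞. -/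
open MeasureTheory ProbabilityTheory Filter

noncomputable section

namespace AvgCutoff

def q (n k : ℕ) (s : Finset (Fin n)) : ℝ :=
  if s.card = k then ((n.choose k : ℝ))⁻¹ else 0

lemma q_nonneg (n k : ℕ) (s : Finset (Fin n)) : 0 ≤ q n k s := by
  unfold q; split <;> positivity

lemma q_ne_zero {n k : ℕ} {s : Finset (Fin n)} (h : q n k s ≠ 0) : s.card = k := by
  by_contra hc; exact h (by simp [q, hc])

def Phi {n : ℕ} (y : Fin n → ℝ) : ℝ := ∑ i, (y i - 1 / n) ^ 2

lemma Phi_nonneg {n : ℕ} (y : Fin n → ℝ) : 0 ≤ Phi y := by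
  unfold Phi; positivity

lemma count_subsets {n k : ℕ} (u : Finset (Fin n)) (huk : u.card ≤ k) :
    (Finset.univ.filter fun s : Finset (Fin n) => s.card = k ∧ u ⊆ s).card
      = (n - u.card).choose (k - u.card) := by
  have h : (Finset.univ.filter fun s : Finset (Fin n) => s.card = k ∧ u ⊆ s).card
      = (Finset.powersetCard (k - u.card) uᶜ).card := by
    apply Finset.card_nbij' (fun s => s \ u) (fun r => r ∪ u)
    · intro s hs
      simp only [Finset.mem_coe, Finset.mem_filter, Finset.mem_univ, true_and] at hs
      simp only [Finset.mem_coe, Finset.mem_powersetCard]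
      refine ⟨fun x hx => ?_, by rw [Finset.card_sdiff_of_subset hs.2, hs.1]⟩
      simp only [Finset.mem_sdiff] at hx
      simpa [Finset.mem_compl] using hx.2
    · intro r hr
      simp only [Finset.mem_coe, Finset.mem_powersetCard] at hr
      have hdisj : Disjoint r u := by
        refine Finset.disjoint_left.mpr fun x hx hxu => ?_
        have := hr.1 hx; simp [Finset.mem_compl, hxu] at this
      simp only [Finset.mem_coe, Finset.mem_filter, Finset.mem_univ, true_and]
      constructor
      · rw [Finset.card_union_of_disjoint hdisj, hr.2]
        omega
      · exact Finset.subset_union_right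
    · intro s hs
      simp only [Finset.mem_coe, Finset.mem_filter, Finset.mem_univ, true_and] at hs
      exact Finset.sdiff_union_of_subset hs.2
    · intro r hr
      simp only [Finset.mem_coe, Finset.mem_powersetCard] at hr
      have hdisj : Disjoint r u := by
        refine Finset.disjoint_left.mpr fun x hx hxu => ?_
        have := hr.1 hx; simp [Finset.mem_compl, hxu] at this
      dsimp only
      rw [Finset.union_sdiff_distrib, Finset.sdiff_self, Finset.union_empty,
        Finset.sdiff_eq_self_of_disjoint hdisj]
  rw [h, Finset.card_powersetCard, Finset.card_compl, Fintype.card_fin]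

variable {n k : ℕ}

lemma count1 (hk : 1 ≤ k) (i : Fin n) :
    ((Finset.univ.filter (fun s : Finset (Fin n) => s.card = k)).filter
        (fun s => i ∈ s)).card = (n - 1).choose (k - 1) := by
  rw [Finset.filter_filter]
  have h := @count_subsets n k {i} (by simpa using hk)
  simp only [Finset.card_singleton] at h
  rw [← h]
  congr 1
  ext s
  simp [Finset.singleton_subset_iff]

lemma sum_over_sets (hk : 1 ≤ k) (g : Fin n → ℝ) :
    ∑ s ∈ Finset.univ.filter (fun s : Finset (Fin n) => s.card = k), ∑ i ∈ s, g i
      = ((n-1).choose (k-1) : ℝ) * ∑ i, g i := by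
  have h1 : ∀ s : Finset (Fin n), ∑ i ∈ s, g i = ∑ i, if i ∈ s then g i else 0 := by
    intro s; rw [Finset.sum_ite_mem, Finset.univ_inter]
  simp_rw [h1]
  rw [Finset.sum_comm, Finset.mul_sum]
  refine Finset.sum_congr rfl fun i _ => ?_
  rw [Finset.sum_ite, Finset.sum_const_zero, add_zero, Finset.sum_const, nsmul_eq_mul,
    count1 hk i]
  simp

lemma count2 (hk : 2 ≤ k) {i j : Fin n} (hij : i ≠ j) :
    ((Finset.univ.filter (fun s : Finset (Fin n) => s.card = k)).filter
        (fun s => i ∈ s ∧ j ∈ s)).card = (n - 2).choose (k - 2) := by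
  rw [Finset.filter_filter]
  have hc : ({i, j} : Finset (Fin n)).card = 2 := Finset.card_pair hij
  have h := @count_subsets n k {i, j} (by omega)
  rw [hc] at h
  rw [← h]
  congr 1
  ext s
  simp [Finset.insert_subset_iff, Finset.singleton_subset_iff, and_assoc]


lemma sum_over_sets_sq (hk : 2 ≤ k) (z : Fin n → ℝ) :
    ∑ s ∈ Finset.univ.filter (fun s : Finset (Fin n) => s.card = k), (∑ i ∈ s, z i) ^ 2
      = ((n-1).choose (k-1) : ℝ) * ∑ i, z i ^ 2
        + ((n-2).choose (k-2) : ℝ) * ((∑ i, z i)^2 - ∑ i, z i ^ 2) := by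
  classical
  set P := Finset.univ.filter (fun s : Finset (Fin n) => s.card = k) with hP
  have h1 : ∀ s : Finset (Fin n), (∑ i ∈ s, z i) ^ 2
      = ∑ i, ∑ j, if i ∈ s ∧ j ∈ s then z i * z j else 0 := by
    intro s
    rw [sq, Finset.sum_mul_sum]
    have hinner : ∀ i ∈ s, ∑ j ∈ s, z i * z j
        = ∑ j, if i ∈ s ∧ j ∈ s then z i * z j else 0 := by
      intro i hi
      have e1 : ∑ j ∈ s, z i * z j = ∑ j, if j ∈ s then z i * z j else 0 := by
        rw [Finset.sum_ite_mem, Finset.univ_inter]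
      rw [e1]
      exact Finset.sum_congr rfl fun j _ => by by_cases hj : j ∈ s <;> simp [hi, hj]
    rw [Finset.sum_congr rfl hinner]
    have e2 : (∑ i : Fin n, ∑ j, if i ∈ s ∧ j ∈ s then z i * z j else 0)
        = ∑ i, if i ∈ s then (∑ j, if i ∈ s ∧ j ∈ s then z i * z j else 0) else 0 := by
      refine Finset.sum_congr rfl fun i _ => ?_
      by_cases hi : i ∈ s <;> simp [hi]
    rw [e2, Finset.sum_ite_mem, Finset.univ_inter]
  simp_rw [h1]
  rw [Finset.sum_comm]
  have h2 : ∀ i : Fin n, ∑ s ∈ P, ∑ j, (if i ∈ s ∧ j ∈ s then z i * z j else 0)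
      = ((n-1).choose (k-1) : ℝ) * z i ^ 2
        + ((n-2).choose (k-2) : ℝ) * (z i * ((∑ j, z j) - z i)) := by
    intro i
    rw [Finset.sum_comm]
    have h3 : ∀ j : Fin n, ∑ s ∈ P, (if i ∈ s ∧ j ∈ s then z i * z j else 0)
        = (if i = j then ((n-1).choose (k-1) : ℝ) else ((n-2).choose (k-2) : ℝ))
            * (z i * z j) := by
      intro j
      rw [Finset.sum_ite, Finset.sum_const_zero, add_zero, Finset.sum_const, nsmul_eq_mul]
      by_cases hij : i = j
      · subst hij
        rw [if_pos rfl]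
        congr 2
        have e3 : (P.filter fun s => i ∈ s ∧ i ∈ s) = P.filter fun s => i ∈ s := by
          congr 1; ext s; simp
        rw [e3, count1 (by omega) i]
      · rw [if_neg hij, count2 hk hij]
    rw [Finset.sum_congr rfl fun j _ => h3 j]
    rw [← Finset.add_sum_erase _ _ (Finset.mem_univ i), if_pos rfl]
    have h4 : ∑ j ∈ Finset.univ.erase i,
        (if i = j then ((n-1).choose (k-1) : ℝ) else ((n-2).choose (k-2) : ℝ)) * (z i * z j)
        = ((n-2).choose (k-2) : ℝ) * (z i * ((∑ j, z j) - z i)) := by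
      have e4 : ∀ j ∈ Finset.univ.erase i,
          (if i = j then ((n-1).choose (k-1) : ℝ) else ((n-2).choose (k-2) : ℝ)) * (z i * z j)
          = (((n-2).choose (k-2) : ℝ) * z i) * z j := by
        intro j hj
        rw [if_neg fun h => (Finset.ne_of_mem_erase hj) h.symm]
        ring
      rw [Finset.sum_congr rfl e4, ← Finset.mul_sum,
        Finset.sum_erase_eq_sub (Finset.mem_univ i)]
      ring
    rw [h4]
    ring_nf
  rw [Finset.sum_congr rfl fun i _ => h2 i]
  rw [Finset.sum_add_distrib, ← Finset.mul_sum, ← Finset.mul_sum]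
  congr 1
  congr 1
  simp_rw [mul_sub]
  rw [Finset.sum_sub_distrib, ← Finset.sum_mul]
  ring
  simp only [Finset.mem_univ, and_self, if_true]
  rw [← Finset.sum_mul_sum]
  ring

lemma Phi_avgStep (hk : k ≠ 0) {s : Finset (Fin n)} (hs : s.card = k) (y : Fin n → ℝ) :
    Phi (avgStep k s y)
      = Phi y - ∑ i ∈ s, (y i - 1/n)^2 + (∑ i ∈ s, (y i - 1/n))^2 / k := by
  have hsplit : Phi (avgStep k s y)
      = ∑ i ∈ s, (avgStep k s y i - 1/n)^2 + ∑ i ∈ sᶜ, (avgStep k s y i - 1/n)^2 := by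
    rw [Phi, ← Finset.sum_add_sum_compl s]
  have h1 : ∑ i ∈ s, (avgStep k s y i - 1/n)^2
      = k * ((∑ j ∈ s, y j)/k - 1/n)^2 := by
    rw [Finset.sum_congr rfl (fun i hi => by rw [show avgStep k s y i = (∑ j ∈ s, y j)/k
      from if_pos hi])]
    rw [Finset.sum_const, hs, nsmul_eq_mul]
  have h2 : ∑ i ∈ sᶜ, (avgStep k s y i - 1/n)^2 = ∑ i ∈ sᶜ, (y i - 1/n)^2 :=
    Finset.sum_congr rfl fun i hi => by
      rw [show avgStep k s y i = y i from if_neg (Finset.mem_compl.mp hi)]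
  have h3 : ∑ i ∈ sᶜ, (y i - 1/n)^2 = Phi y - ∑ i ∈ s, (y i - 1/n)^2 := by
    rw [Phi, ← Finset.sum_add_sum_compl s (fun i => (y i - 1/n)^2)]; ring
  have h4 : ∑ i ∈ s, (y i - 1/n) = (∑ j ∈ s, y j) - k * (1/n) := by
    rw [Finset.sum_sub_distrib, Finset.sum_const, hs, nsmul_eq_mul]
  rw [hsplit, h1, h2, h3, h4]
  have hk' : (k : ℝ) ≠ 0 := Nat.cast_ne_zero.mpr hk
  field_simp
  ring

lemma card_P (hkn : k ≤ n) :
    (Finset.univ.filter (fun s : Finset (Fin n) => s.card = k)).card = n.choose k := by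
  have : (Finset.univ.filter (fun s : Finset (Fin n) => s.card = k))
      = Finset.powersetCard k Finset.univ := by
    ext s; simp [Finset.mem_powersetCard]
  rw [this, Finset.card_powersetCard, Finset.card_univ, Fintype.card_fin]

lemma key (hk : 2 ≤ k) (hkn : k < n) (y : Fin n → ℝ) (hy : ∑ i, y i = 1) :
    ∑ s : Finset (Fin n), q n k s * Phi (avgStep k s y)
      = (1 - ((k:ℝ) - 1)/((n:ℝ) - 1)) * Phi y := by
  classical
  have hn3 : 3 ≤ n := by omega
  have hk0 : k ≠ 0 := by omega
  have hkR : (k : ℝ) ≠ 0 := Nat.cast_ne_zero.mpr hk0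
  have hnR : (n : ℝ) ≠ 0 := Nat.cast_ne_zero.mpr (by omega)
  have hn1R : (n : ℝ) - 1 ≠ 0 := by
    have : (3:ℝ) ≤ (n:ℝ) := by exact_mod_cast hn3
    linarith
  set a := (n.choose k : ℝ) with ha
  set b := ((n-1).choose (k-1) : ℝ) with hb
  set d := ((n-2).choose (k-2) : ℝ) with hd
  have ha0 : a ≠ 0 := by
    have := Nat.choose_pos (le_of_lt hkn)
    positivity
  -- choose identities
  have hab : (n:ℝ) * b = (k:ℝ) * a := by
    have h := Nat.add_one_mul_choose_eq (n-1) (k-1)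
    have e1 : n - 1 + 1 = n := by omega
    have e2 : k - 1 + 1 = k := by omega
    rw [e1, e2] at h
    have hc := congrArg (Nat.cast (R := ℝ)) h
    push_cast at hc
    linarith
  have hbd : ((n:ℝ) - 1) * d = ((k:ℝ) - 1) * b := by
    have h := Nat.add_one_mul_choose_eq (n-2) (k-2)
    have e1 : n - 2 + 1 = n - 1 := by omega
    have e2 : k - 2 + 1 = k - 1 := by omega
    rw [e1, e2] at h
    have hc := congrArg (Nat.cast (R := ℝ)) h
    push_cast [Nat.cast_sub (by omega : 1 ≤ n), Nat.cast_sub (by omega : 1 ≤ k)] at hc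
    linarith
  -- restrict the sum
  set P := Finset.univ.filter (fun s : Finset (Fin n) => s.card = k) with hP
  have hrestrict : ∑ s : Finset (Fin n), q n k s * Phi (avgStep k s y)
      = ∑ s ∈ P, a⁻¹ * Phi (avgStep k s y) := by
    rw [hP, Finset.sum_filter]
    refine Finset.sum_congr rfl fun s _ => ?_
    by_cases hc : s.card = k <;> simp [q, hc, ha]
  rw [hrestrict]
  have hS : ∑ i : Fin n, (y i - 1/n) = 0 := by
    rw [Finset.sum_sub_distrib, hy, Finset.sum_const, Finset.card_univ, Fintype.card_fin,
      nsmul_eq_mul]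
    field_simp
    simp
  have hQ : Phi y = ∑ i, (y i - 1/(n:ℝ))^2 := rfl
  have hcongr : ∀ s ∈ P, a⁻¹ * Phi (avgStep k s y)
      = a⁻¹ * (Phi y - ∑ i ∈ s, (y i - 1/n)^2 + (∑ i ∈ s, (y i - 1/n))^2 / k) := by
    intro s hsP
    rw [Phi_avgStep hk0 (Finset.mem_filter.mp hsP).2 y]
  rw [Finset.sum_congr rfl hcongr, ← Finset.mul_sum]
  have hsum : ∑ s ∈ P, (Phi y - ∑ i ∈ s, (y i - 1/n)^2 + (∑ i ∈ s, (y i - 1/n))^2 / k)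
      = (a * Phi y - b * Phi y) + (b * Phi y + d * (0 - Phi y)) / k := by
    rw [Finset.sum_add_distrib, Finset.sum_sub_distrib, Finset.sum_const, card_P hkn.le,
      nsmul_eq_mul, ← ha]
    rw [sum_over_sets (by omega) (fun i => (y i - 1/n)^2), ← hb, ← hQ]
    rw [← Finset.sum_div, sum_over_sets_sq hk (fun i => (y i - 1/n)), hS, ← hb, ← hd, ← hQ]
    ring_nf
  rw [hsum]
  field_simp
  linear_combination (-(Phi y) * ((k:ℝ)-1)) * hab + (-(Phi y)) * hbd

def x0fun (n : ℕ) : Fin n → ℝ := fun i => if i.val = 0 then (1 : ℝ) else 0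

def procT (k : ℕ) {n : ℕ} (x0 : Fin n → ℝ) : (m : ℕ) → (Fin m → Finset (Fin n)) → Fin n → ℝ
  | 0, _ => x0
  | m + 1, t => avgStep k (t (Fin.last m)) (procT k x0 m (Fin.init t))

def W (n k : ℕ) {m : ℕ} (t : Fin m → Finset (Fin n)) : ℝ := ∏ i, q n k (t i)

lemma W_nonneg {m : ℕ} (t : Fin m → Finset (Fin n)) : 0 ≤ W n k t :=
  Finset.prod_nonneg fun i _ => q_nonneg n k (t i)

def Em (n k : ℕ) (x0 : Fin n → ℝ) (m : ℕ) : ℝ :=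
  ∑ t : Fin m → Finset (Fin n), W n k t * Phi (procT k x0 m t)

lemma sum_avgStep (hk : k ≠ 0) {s : Finset (Fin n)} (hs : s.card = k) (y : Fin n → ℝ) :
    ∑ i, avgStep k s y i = ∑ i, y i := by
  rw [← Finset.sum_add_sum_compl s (avgStep k s y), ← Finset.sum_add_sum_compl s y]
  congr 1
  · rw [Finset.sum_congr rfl fun i hi => show avgStep k s y i = (∑ j ∈ s, y j)/k
      from if_pos hi, Finset.sum_const, hs, nsmul_eq_mul]
    have : (k:ℝ) ≠ 0 := Nat.cast_ne_zero.mpr hk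
    field_simp
  · exact Finset.sum_congr rfl fun i hi =>
      show avgStep k s y i = y i from if_neg (Finset.mem_compl.mp hi)

lemma W_succ {m : ℕ} (t : Fin (m+1) → Finset (Fin n)) :
    W n k t = W n k (Fin.init t) * q n k (t (Fin.last m)) := by
  rw [W, Fin.prod_univ_castSucc]
  rfl

lemma sum_procT (hk : k ≠ 0) {x0 : Fin n → ℝ} (hx0 : ∑ i, x0 i = 1) :
    ∀ m (t : Fin m → Finset (Fin n)), W n k t ≠ 0 → ∑ i, procT k x0 m t i = 1 := by
  intro m
  induction m with
  | zero => intro t _; exact hx0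
  | succ m ih =>
    intro t hW
    rw [W_succ] at hW
    have h1 : W n k (Fin.init t) ≠ 0 := fun h => hW (by rw [h, zero_mul])
    have h2 : (t (Fin.last m)).card = k := q_ne_zero fun h => hW (by rw [h, mul_zero])
    show ∑ i, avgStep k (t (Fin.last m)) (procT k x0 m (Fin.init t)) i = 1
    rw [sum_avgStep hk h2, ih (Fin.init t) h1]

lemma Em_succ (hk : 2 ≤ k) (hkn : k < n) {x0 : Fin n → ℝ} (hx0 : ∑ i, x0 i = 1) (m : ℕ) :
    Em n k x0 (m+1) = (1 - ((k:ℝ) - 1)/((n:ℝ) - 1)) * Em n k x0 m := by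
  classical
  set c := (1 - ((k:ℝ) - 1)/((n:ℝ) - 1)) with hc
  have hk0 : k ≠ 0 := by omega
  rw [Em, ← Equiv.sum_comp (Fin.snocEquiv (fun _ => Finset (Fin n)))
    (fun t => W n k t * Phi (procT k x0 (m+1) t)), Fintype.sum_prod_type]
  have hterm : ∀ (s : Finset (Fin n)) (t₀ : Fin m → Finset (Fin n)),
      W n k ((Fin.snocEquiv (fun _ => Finset (Fin n))) (s, t₀))
        * Phi (procT k x0 (m+1) ((Fin.snocEquiv (fun _ => Finset (Fin n))) (s, t₀)))
      = (W n k t₀ * q n k s) * Phi (avgStep k s (procT k x0 m t₀)) := by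
    intro s t₀
    have e1 : (Fin.snocEquiv (fun _ => Finset (Fin n))) (s, t₀) = Fin.snoc t₀ s := rfl
    rw [e1, W_succ]
    have e2 : Fin.init (Fin.snoc t₀ s : Fin (m+1) → Finset (Fin n)) = t₀ := by simp
    have e3 : (Fin.snoc t₀ s : Fin (m+1) → Finset (Fin n)) (Fin.last m) = s := by simp
    have e4 : procT k x0 (m+1) (Fin.snoc t₀ s) = avgStep k s (procT k x0 m t₀) := by
      show avgStep k ((Fin.snoc t₀ s : Fin (m+1) → Finset (Fin n)) (Fin.last m))
          (procT k x0 m (Fin.init (Fin.snoc t₀ s : Fin (m+1) → Finset (Fin n)))) = _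
      rw [e2, e3]
    rw [e4, e2, e3]
  simp_rw [hterm]
  rw [Finset.sum_comm]
  have hinner : ∀ t₀ : Fin m → Finset (Fin n),
      ∑ s : Finset (Fin n), (W n k t₀ * q n k s) * Phi (avgStep k s (procT k x0 m t₀))
      = c * (W n k t₀ * Phi (procT k x0 m t₀)) := by
    intro t₀
    by_cases hW : W n k t₀ = 0
    · simp [hW]
    · have hs := sum_procT hk0 hx0 m t₀ hW
      have hkey := key hk hkn (procT k x0 m t₀) hs
      calc ∑ s : Finset (Fin n), (W n k t₀ * q n k s) * Phi (avgStep k s (procT k x0 m t₀))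
          = W n k t₀ * ∑ s : Finset (Fin n), q n k s * Phi (avgStep k s (procT k x0 m t₀)) := by
            rw [Finset.mul_sum]; exact Finset.sum_congr rfl fun s _ => by ring
        _ = W n k t₀ * (c * Phi (procT k x0 m t₀)) := by rw [hkey]
        _ = c * (W n k t₀ * Phi (procT k x0 m t₀)) := by ring
  rw [Finset.sum_congr rfl fun t₀ _ => hinner t₀, ← Finset.mul_sum]
  rfl

lemma sum_x0 (hn : 0 < n) : ∑ i, x0fun n i = 1 := by
  haveI : NeZero n := ⟨hn.ne'⟩
  simp only [x0fun]
  have h : ∀ i : Fin n, (if i.val = 0 then (1:ℝ) else 0) = (if i = (0 : Fin n) then 1 else 0) :=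
    fun i => by simp only [Fin.ext_iff, Fin.val_zero]
  rw [Finset.sum_congr rfl fun i _ => h i, Finset.sum_ite_eq' Finset.univ (0 : Fin n)]
  simp

lemma sum_x0_sq (hn : 0 < n) : ∑ i, (x0fun n i)^2 = 1 := by
  have : ∀ i : Fin n, (x0fun n i)^2 = x0fun n i := by
    intro i; simp only [x0fun]; split_ifs <;> norm_num
  rw [Finset.sum_congr rfl fun i _ => this i]
  exact sum_x0 hn

lemma Phi_x0 (hn : 0 < n) : Phi (x0fun n) = 1 - 1/(n:ℝ) := by
  have hnR : (n:ℝ) ≠ 0 := Nat.cast_ne_zero.mpr hn.ne'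
  have h : ∀ i : Fin n, (x0fun n i - 1/(n:ℝ))^2
      = (x0fun n i)^2 - (2/n) * x0fun n i + (1/n)^2 := fun i => by ring
  rw [Phi, Finset.sum_congr rfl fun i _ => h i, Finset.sum_add_distrib,
    Finset.sum_sub_distrib, ← Finset.mul_sum, sum_x0 hn, sum_x0_sq hn,
    Finset.sum_const, Finset.card_univ, Fintype.card_fin, nsmul_eq_mul]
  field_simp
  ring

lemma Em_zero (hn : 0 < n) : Em n k (x0fun n) 0 = 1 - 1/(n:ℝ) := by
  rw [Em, Fintype.sum_unique]
  show W n k _ * Phi (x0fun n) = _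
  rw [Phi_x0 hn, W]
  simp

lemma Em_eq (hk : 2 ≤ k) (hkn : k < n) (m : ℕ) :
    Em n k (x0fun n) m = (1 - ((k:ℝ) - 1)/((n:ℝ) - 1))^m * (1 - 1/(n:ℝ)) := by
  induction m with
  | zero => rw [Em_zero (by omega), pow_zero, one_mul]
  | succ m ih => rw [Em_succ hk hkn (sum_x0 (by omega)) m, ih, pow_succ]; ring


lemma c_nonneg (hk : 2 ≤ k) (hkn : k < n) : 0 ≤ 1 - ((k:ℝ) - 1)/((n:ℝ) - 1) := by
  have h1 : (1:ℝ) ≤ (k:ℝ) := by exact_mod_cast (by omega : 1 ≤ k)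
  have h2 : (k:ℝ) ≤ (n:ℝ) := by exact_mod_cast hkn.le
  have h3 : (0:ℝ) < (n:ℝ) - 1 := by
    have : (2:ℝ) ≤ (k:ℝ) := by exact_mod_cast hk
    linarith
  have := div_le_one_of_le₀ (by linarith : (k:ℝ) - 1 ≤ (n:ℝ) - 1) h3.le
  linarith

lemma sum_W_le (hk : 2 ≤ k) (hkn : k < n) {m : ℕ} {ε : ℝ} (hε : 0 < ε) :
    ∑ t ∈ Finset.univ.filter (fun t : Fin m → Finset (Fin n) =>
        ε ≤ ∑ i, |procT k (x0fun n) m t i - 1/n|), W n k t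
      ≤ (n:ℝ)/ε^2 * (1 - ((k:ℝ)-1)/((n:ℝ)-1))^m := by
  classical
  have hn0 : (0:ℝ) < (n:ℝ) := by
    have : 0 < n := by omega
    exact_mod_cast this
  have step1 : ∀ t ∈ Finset.univ.filter (fun t : Fin m → Finset (Fin n) =>
      ε ≤ ∑ i, |procT k (x0fun n) m t i - 1/n|),
      W n k t ≤ (n:ℝ)/ε^2 * (W n k t * Phi (procT k (x0fun n) m t)) := by
    intro t ht
    have hT : ε ≤ ∑ i, |procT k (x0fun n) m t i - 1/n| := (Finset.mem_filter.mp ht).2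
    have hCS : (∑ i, |procT k (x0fun n) m t i - 1/n|)^2
        ≤ (n:ℝ) * Phi (procT k (x0fun n) m t) := by
      have h := sq_sum_le_card_mul_sum_sq
        (s := Finset.univ) (f := fun i : Fin n => |procT k (x0fun n) m t i - 1/n|)
      simp only [Finset.card_univ, Fintype.card_fin, sq_abs] at h
      exact_mod_cast h
    have hε2 : ε^2 ≤ (n:ℝ) * Phi (procT k (x0fun n) m t) :=
      le_trans (pow_le_pow_left₀ hε.le hT 2) hCS
    have h1 : 1 ≤ (n:ℝ)/ε^2 * Phi (procT k (x0fun n) m t) := by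
      rw [div_mul_eq_mul_div, le_div_iff₀ (by positivity)]
      linarith
    calc W n k t = W n k t * 1 := by ring
      _ ≤ W n k t * ((n:ℝ)/ε^2 * Phi (procT k (x0fun n) m t)) :=
          mul_le_mul_of_nonneg_left h1 (W_nonneg t)
      _ = (n:ℝ)/ε^2 * (W n k t * Phi (procT k (x0fun n) m t)) := by ring
  calc ∑ t ∈ Finset.univ.filter (fun t : Fin m → Finset (Fin n) =>
        ε ≤ ∑ i, |procT k (x0fun n) m t i - 1/n|), W n k t
      ≤ ∑ t ∈ Finset.univ.filter (fun t : Fin m → Finset (Fin n) =>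
        ε ≤ ∑ i, |procT k (x0fun n) m t i - 1/n|),
          (n:ℝ)/ε^2 * (W n k t * Phi (procT k (x0fun n) m t)) :=
        Finset.sum_le_sum step1
    _ ≤ ∑ t : Fin m → Finset (Fin n),
          (n:ℝ)/ε^2 * (W n k t * Phi (procT k (x0fun n) m t)) := by
        apply Finset.sum_le_sum_of_subset_of_nonneg (Finset.filter_subset _ _)
        intro t _ _
        have := W_nonneg (n := n) (k := k) t
        have := Phi_nonneg (procT k (x0fun n) m t)
        positivity
    _ = (n:ℝ)/ε^2 * Em n k (x0fun n) m := by rw [Em, ← Finset.mul_sum]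
    _ = (n:ℝ)/ε^2 * ((1 - ((k:ℝ)-1)/((n:ℝ)-1))^m * (1 - 1/(n:ℝ))) := by
        rw [Em_eq hk hkn]
    _ ≤ (n:ℝ)/ε^2 * ((1 - ((k:ℝ)-1)/((n:ℝ)-1))^m * 1) := by
        apply mul_le_mul_of_nonneg_left _ (by positivity)
        apply mul_le_mul_of_nonneg_left _ (pow_nonneg (c_nonneg hk hkn) m)
        have : 0 < 1/(n:ℝ) := by positivity
        linarith
    _ = (n:ℝ)/ε^2 * (1 - ((k:ℝ)-1)/((n:ℝ)-1))^m := by ring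

lemma proc_eq_procT {Ω' : Type*} (x0 : Fin n → ℝ) (A : ℕ → Ω' → Finset (Fin n)) (ω : Ω') :
    ∀ m, proc k x0 A ω m = procT k x0 m (fun i : Fin m => A i.val ω) := by
  intro m
  induction m with
  | zero => rfl
  | succ m ih =>
    show avgStep k (A m ω) (proc k x0 A ω m) = _
    have e1 : procT k x0 (m+1) (fun i : Fin (m+1) => A i.val ω)
        = avgStep k (A m ω)
            (procT k x0 m (Fin.init (fun i : Fin (m+1) => A i.val ω))) := rfl
    have e2 : Fin.init (fun i : Fin (m+1) => A i.val ω) = fun i : Fin m => A i.val ω := by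
      funext i
      rfl
    rw [e1, e2, ih]


lemma measure_bound (hk : 2 ≤ k) (hkn : k < n)
    {Ω' : Type*} [MeasurableSpace Ω'] (μ' : Measure Ω') [IsProbabilityMeasure μ']
    (A : ℕ → Ω' → Finset (Fin n))
    (hindep : iIndepFun A μ')
    (hunif : ∀ (m : ℕ) (s : Finset (Fin n)),
      μ' (A m ⁻¹' {s}) = if s.card = k then ((n.choose k : ENNReal))⁻¹ else 0)
    (m : ℕ) {ε : ℝ} (hε : 0 < ε) :
    μ' {ω | ε ≤ ∑ i, |proc k (x0fun n) A ω m i - 1/n|}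
      ≤ ENNReal.ofReal ((n:ℝ)/ε^2 * (1 - ((k:ℝ)-1)/((n:ℝ)-1))^m) := by
  classical
  set F := Finset.univ.filter (fun t : Fin m → Finset (Fin n) =>
      ε ≤ ∑ i, |procT k (x0fun n) m t i - 1/n|) with hF
  set Ev : (Fin m → Finset (Fin n)) → Set Ω' := fun t => ⋂ i : Fin m, A i.val ⁻¹' {t i}
    with hEv
  have hsub : {ω | ε ≤ ∑ i, |proc k (x0fun n) A ω m i - 1/n|} ⊆ ⋃ t ∈ F, Ev t := by
    intro ω hω
    simp only [Set.mem_setOf_eq] at hω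
    rw [proc_eq_procT] at hω
    refine Set.mem_biUnion (show (fun i : Fin m => A i.val ω) ∈ F by
      simp only [hF, Finset.mem_filter, Finset.mem_univ, true_and]; exact hω) ?_
    simp only [hEv, Set.mem_iInter, Set.mem_preimage, Set.mem_singleton_iff]
    intro i
    trivial
  refine (measure_mono hsub).trans ((measure_biUnion_finset_le F Ev).trans ?_)
  have hqE : ∀ s : Finset (Fin n),
      (if s.card = k then ((n.choose k : ENNReal))⁻¹ else 0) = ENNReal.ofReal (q n k s) := by
    intro s
    by_cases hc : s.card = k
    · rw [if_pos hc, q, if_pos hc]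
      have hpos : (0:ℝ) < (n.choose k : ℝ) := by
        exact_mod_cast Nat.choose_pos hkn.le
      rw [ENNReal.ofReal_inv_of_pos hpos, ENNReal.ofReal_natCast]
    · rw [if_neg hc, q, if_neg hc, ENNReal.ofReal_zero]
  have hEvMeas : ∀ t : Fin m → Finset (Fin n),
      μ' (Ev t) = ∏ i : Fin m, ENNReal.ofReal (q n k (t i)) := by
    intro t
    set sets : ℕ → Set (Finset (Fin n)) := fun i =>
      if h : i < m then ({t ⟨i, h⟩} : Set (Finset (Fin n))) else Set.univ with hsets
    have h1 : Ev t = ⋂ i ∈ Finset.range m, A i ⁻¹' (sets i) := by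
      ext ω
      simp only [hEv, Set.mem_iInter, Set.mem_preimage, Set.mem_singleton_iff,
        Finset.mem_range]
      constructor
      · intro h i hi
        rw [hsets]
        simp only [hi, dif_pos]
        exact h ⟨i, hi⟩
      · intro h i
        have := h i.val i.isLt
        rw [hsets] at this
        simp only [i.isLt, dif_pos] at this
        simpa using this
    rw [h1, hindep.measure_inter_preimage_eq_mul (Finset.range m)
      (fun i _ => (by trivial : MeasurableSet[⊤] (sets i)))]
    have h2 : ∀ i ∈ Finset.range m, μ' (A i ⁻¹' sets i)
        = (fun j : ℕ => if h : j < m then ENNReal.ofReal (q n k (t ⟨j, h⟩)) else 1) i := by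
      intro i hi
      rw [Finset.mem_range] at hi
      simp only [hsets, hi, dif_pos]
      rw [hunif i (t ⟨i, hi⟩), hqE]
    rw [Finset.prod_congr rfl h2, ← Fin.prod_univ_eq_prod_range]
    exact Finset.prod_congr rfl fun i _ => by simp [i.isLt]
  have h3 : ∑ t ∈ F, μ' (Ev t) = ENNReal.ofReal (∑ t ∈ F, W n k t) := by
    rw [ENNReal.ofReal_sum_of_nonneg fun t _ => W_nonneg t]
    refine Finset.sum_congr rfl fun t _ => ?_
    rw [hEvMeas t, W, ENNReal.ofReal_prod_of_nonneg fun i _ => q_nonneg n k (t i)]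
  rw [h3]
  exact ENNReal.ofReal_le_ofReal (sum_W_le hk hkn hε)

lemma asympt (hk : 2 ≤ k) {θ ε : ℝ} (hθ : 1/((k:ℝ)-1) < θ) (hε : 0 < ε) (hn : k < n) :
    (n:ℝ)/ε^2 * (1 - ((k:ℝ)-1)/((n:ℝ)-1)) ^ (⌊θ * n * Real.log n⌋₊)
      ≤ Real.exp 1 / ε^2 * (n:ℝ) ^ (1 - θ*((k:ℝ)-1)) := by
  have hk1 : (1:ℝ) ≤ (k:ℝ) - 1 := by
    have : (2:ℝ) ≤ (k:ℝ) := by exact_mod_cast hk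
    linarith
  have hθ0 : 0 < θ := lt_trans (by positivity) hθ
  have hn3 : 3 ≤ n := by omega
  have hn0 : (0:ℝ) < (n:ℝ) := by
    have : (3:ℝ) ≤ (n:ℝ) := by exact_mod_cast hn3
    linarith
  have hn1 : (0:ℝ) < (n:ℝ) - 1 := by
    have : (3:ℝ) ≤ (n:ℝ) := by exact_mod_cast hn3
    linarith
  set r := ((k:ℝ)-1)/((n:ℝ)-1) with hr
  have hr0 : 0 ≤ r := by positivity
  have hr1 : r ≤ 1 := by
    rw [hr, div_le_one hn1]
    have : (k:ℝ) ≤ (n:ℝ) := by exact_mod_cast hn.le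
    linarith
  set x := θ * n * Real.log n with hx
  set m := ⌊x⌋₊ with hm
  set β := θ * ((k:ℝ)-1) with hβ
  have hL : 0 ≤ Real.log n := Real.log_nonneg (by exact_mod_cast (by omega : 1 ≤ n))
  have hx0 : 0 ≤ x := by positivity
  have hfloor : x - 1 ≤ (m:ℝ) := by
    have := Nat.lt_floor_add_one x
    push_cast
    linarith
  have hβL : β * Real.log n ≤ x * r := by
    rw [hx, hr, hβ]
    rw [← mul_div_assoc, le_div_iff₀ hn1]
    have h0 : 0 ≤ θ * ((k:ℝ)-1) * Real.log n := by positivity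
    nlinarith
  have chain : (1 - r)^m ≤ Real.exp 1 * (n:ℝ) ^ (-β) := by
    calc (1 - r)^m ≤ (Real.exp (-r))^m := by
          apply pow_le_pow_left₀ (by rw [hr]; exact c_nonneg hk hn)
          linarith [Real.add_one_le_exp (-r)]
      _ = Real.exp (-((m:ℝ) * r)) := by
          rw [← Real.exp_nat_mul]
          congr 1 <;> ring
      _ ≤ Real.exp (r - x * r) := by
          rw [Real.exp_le_exp]
          nlinarith
      _ = Real.exp r * Real.exp (-(x * r)) := by
          rw [← Real.exp_add]
          congr 1 <;> ring
      _ ≤ Real.exp 1 * (n:ℝ) ^ (-β) := by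
          have e1 : (n:ℝ) ^ (-β) = Real.exp (-(β * Real.log n)) := by
            rw [Real.rpow_def_of_pos hn0]
            congr 1
            ring
          rw [e1]
          apply mul_le_mul (Real.exp_le_exp.mpr hr1)
            (Real.exp_le_exp.mpr (by linarith)) (Real.exp_pos _).le (Real.exp_pos 1).le
  calc (n:ℝ)/ε^2 * (1 - r)^m ≤ (n:ℝ)/ε^2 * (Real.exp 1 * (n:ℝ) ^ (-β)) := by
        apply mul_le_mul_of_nonneg_left chain (by positivity)
    _ = Real.exp 1 / ε^2 * ((n:ℝ)^(1:ℝ) * (n:ℝ) ^ (-β)) := by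
        rw [Real.rpow_one]
        ring
    _ = Real.exp 1 / ε^2 * (n:ℝ) ^ (1 - β) := by
        rw [← Real.rpow_add hn0]
        congr 2 <;> ring

end AvgCutoff

/-- For `θ > 1/(k-1)`, the `L¹` distance `T_n(⌊θ n log n⌋)` of the `k`-averaging
process started from `(1,0,…,0)` converges to `0` in probability as `n → ∞`. -/
theorem averaging_L1_upper_cutoff
    (k : ℕ) (hk : 2 ≤ k)
    (Ω : ℕ → Type*) [∀ n, MeasurableSpace (Ω n)]
    (μ : ∀ n, Measure (Ω n)) [∀ n, IsProbabilityMeasure (μ n)]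
    (A : ∀ n, ℕ → Ω n → Finset (Fin n))
    (hmeas : ∀ n, k < n → ∀ m, Measurable (A n m))
    (hindep : ∀ n, k < n → iIndepFun (A n) (μ n))
    (hunif : ∀ n, k < n → ∀ (m : ℕ) (s : Finset (Fin n)),
      μ n (A n m ⁻¹' {s}) = if s.card = k then ((n.choose k : ENNReal))⁻¹ else 0)
    (θ : ℝ) (hθ : 1 / ((k : ℝ) - 1) < θ) :
    ∀ ε > 0, Tendsto
      (fun n => μ n {ω |
        ε ≤ ∑ i, |proc k (fun i : Fin n => if i.val = 0 then (1 : ℝ) else 0) (A n) ω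
                (⌊θ * n * Real.log n⌋₊) i - 1 / n|})
      atTop (nhds 0) := by
  intro ε hε
  have hk1 : (0:ℝ) < (k:ℝ) - 1 := by
    have : (2:ℝ) ≤ (k:ℝ) := by exact_mod_cast hk
    linarith
  have hβ1 : 1 < θ * ((k:ℝ)-1) := by
    rw [div_lt_iff₀ hk1] at hθ
    linarith
  have hup : Tendsto (fun n : ℕ =>
      ENNReal.ofReal (Real.exp 1/ε^2 * (n:ℝ)^(1 - θ*((k:ℝ)-1)))) atTop (nhds 0) := by
    have h1 : Tendsto (fun n : ℕ => (n:ℝ) ^ (1 - θ*((k:ℝ)-1))) atTop (nhds 0) := by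
      have h2 := (tendsto_rpow_neg_atTop (by linarith : (0:ℝ) < θ*((k:ℝ)-1) - 1)).comp
        (tendsto_natCast_atTop_atTop (R := ℝ))
      have he : (fun n : ℕ => (n:ℝ) ^ (1 - θ*((k:ℝ)-1)))
          = (fun x : ℝ => x ^ (-(θ*((k:ℝ)-1) - 1))) ∘ (fun n : ℕ => (n:ℝ)) := by
        funext nn
        simp only [Function.comp_apply]
        congr 1
        ring
      rw [he]
      exact h2
    have h2 := h1.const_mul (Real.exp 1/ε^2)
    rw [mul_zero] at h2
    have h3 := ENNReal.tendsto_ofReal h2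
    rw [ENNReal.ofReal_zero] at h3
    exact h3
  refine tendsto_of_tendsto_of_tendsto_of_le_of_le' tendsto_const_nhds hup
    (Eventually.of_forall fun n => zero_le) ?_
  filter_upwards [eventually_gt_atTop k] with n hn
  have hb := AvgCutoff.measure_bound hk hn (μ n) (A n) (hindep n hn) (hunif n hn)
      (⌊θ * n * Real.log n⌋₊) hε
  exact hb.trans (ENNReal.ofReal_le_ofReal (AvgCutoff.asympt hk hθ hε hn))

end
end

section
/- Let (x_m)_{m≥0} be the k-averaging process on ℝ^n with n > k ≥ 2, started from a deterministic vector x_0 with ∑_{i=1}^n x_{0,i} = 0, let S_n(l) = ∑_{i=1}^n x_{l,i}², and let F_l be the σ-algebra generated by the process up to time l. Then for every l ≥ 0, almost surely E[S_n(l+1) | F_l] = (1 − (k−1)/(n−1)) · S_n(l). -/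
open MeasureTheory ProbabilityTheory Filter

noncomputable section

/-- The natural σ-algebra generated by the `k`-averaging process up to time `l`. -/
def procFiltration {Ω : Type*} {n : ℕ} (k : ℕ) (x0 : Fin n → ℝ)
    (A : ℕ → Ω → Finset (Fin n)) (l : ℕ) : MeasurableSpace Ω :=
  ⨆ m ∈ Set.Iic l, MeasurableSpace.comap (fun ω => proc k x0 A ω m) inferInstance

section Aux

instance inst_s2 (α : Type*) : MeasurableSingletonClass (Finset α) := ⟨fun _ => trivial⟩

/-- Deterministic version of the process, driven by a fixed sequence of subsets. -/
def detProc {n : ℕ} (k : ℕ) (x0 : Fin n → ℝ) (t : ℕ → Finset (Fin n)) : ℕ → Fin n → ℝ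
  | 0 => x0
  | m + 1 => avgStep k (t m) (detProc k x0 t m)

lemma proc_eq_detProc {Ω : Type*} {n : ℕ} (k : ℕ) (x0 : Fin n → ℝ)
    (A : ℕ → Ω → Finset (Fin n)) (ω : Ω) : ∀ m, proc k x0 A ω m = detProc k x0 (fun i => A i ω) m
  | 0 => rfl
  | m + 1 => by
    show avgStep k (A m ω) (proc k x0 A ω m) = avgStep k (A m ω) (detProc k x0 (fun i => A i ω) m)
    rw [proc_eq_detProc k x0 A ω m]

lemma detProc_congr {n : ℕ} (k : ℕ) (x0 : Fin n → ℝ) {t t' : ℕ → Finset (Fin n)} :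
    ∀ m, (∀ i < m, t i = t' i) → detProc k x0 t m = detProc k x0 t' m
  | 0, _ => rfl
  | m + 1, h => by
    show avgStep k (t m) (detProc k x0 t m) = avgStep k (t' m) (detProc k x0 t' m)
    rw [detProc_congr k x0 m (fun i hi => h i (by omega)), h m (by omega)]

lemma avgStep_sum {n k : ℕ} (hk : 1 ≤ k) (a : Finset (Fin n)) (ha : a.card = k)
    (x : Fin n → ℝ) : ∑ i, avgStep k a x i = ∑ i, x i := by
  have hsplit := Finset.sum_sdiff (f := fun i => avgStep k a x i) (Finset.subset_univ a)
  have hsplit' := Finset.sum_sdiff (f := fun i => x i) (Finset.subset_univ a)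
  rw [← hsplit, ← hsplit']
  have h1 : ∑ i ∈ Finset.univ \ a, avgStep k a x i = ∑ i ∈ Finset.univ \ a, x i := by
    refine Finset.sum_congr rfl fun i hi => ?_
    rw [Finset.mem_sdiff] at hi
    simp [avgStep, hi.2]
  have h2 : ∑ i ∈ a, avgStep k a x i = ∑ i ∈ a, x i := by
    have he : ∀ i ∈ a, avgStep k a x i = (∑ j ∈ a, x j) / k := by
      intro i hi; simp [avgStep, hi]
    rw [Finset.sum_congr rfl he, Finset.sum_const, ha, nsmul_eq_mul]
    have hk0 : (k : ℝ) ≠ 0 := by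
      have : 0 < k := by omega
      exact_mod_cast this.ne'
    field_simp
  rw [h1, h2]

lemma detProc_sum_zero {n k : ℕ} (hk : 1 ≤ k) (x0 : Fin n → ℝ) (hx0 : ∑ i, x0 i = 0)
    (t : ℕ → Finset (Fin n)) :
    ∀ m, (∀ i < m, (t i).card = k) → ∑ i, detProc k x0 t m i = 0
  | 0, _ => hx0
  | m + 1, h => by
    show ∑ i, avgStep k (t m) (detProc k x0 t m) i = 0
    rw [avgStep_sum hk (t m) (h m (by omega))]
    exact detProc_sum_zero hk x0 hx0 t m (fun i hi => h i (by omega))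

open Finset

lemma count_supersets {α : Type*} [DecidableEq α] [Fintype α] (k : ℕ) (s : Finset α)
    (hs : s.card ≤ k) :
    ((Finset.powersetCard k (Finset.univ : Finset α)).filter (fun a => s ⊆ a)).card
      = (Fintype.card α - s.card).choose (k - s.card) := by
  have h1 : ((Finset.univ : Finset α) \ s).card = Fintype.card α - s.card := by
    rw [card_sdiff_of_subset (subset_univ s), card_univ]
  rw [← h1, ← Finset.card_powersetCard]
  apply Finset.card_bij' (fun a _ => a \ s) (fun b _ => b ∪ s)
  · intro a ha
    simp only [mem_filter, mem_powersetCard] at ha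
    simp only [mem_powersetCard]
    refine ⟨sdiff_subset_sdiff ha.1.1 subset_rfl, ?_⟩
    rw [card_sdiff_of_subset ha.2, ha.1.2]
  · intro b hb
    simp only [mem_powersetCard] at hb
    simp only [mem_filter, mem_powersetCard]
    have hdisj : Disjoint b s := by
      intro t htb hts x hx
      exact absurd (mem_sdiff.mp (hb.1 (htb hx))).2 (not_not.mpr (hts hx))
    refine ⟨⟨subset_univ _, ?_⟩, subset_union_right⟩
    rw [card_union_of_disjoint hdisj, hb.2]
    omega
  · intro a ha
    simp only [mem_filter] at ha
    exact sdiff_union_of_subset ha.2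
  · intro b hb
    simp only [mem_powersetCard] at hb
    have hdisj : Disjoint b s := by
      intro t htb hts x hx
      exact absurd (mem_sdiff.mp (hb.1 (htb hx))).2 (not_not.mpr (hts hx))
    exact union_sdiff_cancel_right hdisj

lemma filter_mem_card {n k : ℕ} (hk : 1 ≤ k) (i : Fin n) :
    ((Finset.powersetCard k (Finset.univ : Finset (Fin n))).filter (fun a => i ∈ a)).card
      = (n - 1).choose (k - 1) := by
  have h := count_supersets (α := Fin n) k {i} (by simpa using hk)
  simp only [Finset.singleton_subset_iff, Finset.card_singleton, Fintype.card_fin] at h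
  exact h

lemma filter_pair_card {n k : ℕ} (hk : 2 ≤ k) {i j : Fin n} (hij : i ≠ j) :
    ((Finset.powersetCard k (Finset.univ : Finset (Fin n))).filter
        (fun a => i ∈ a ∧ j ∈ a)).card = (n - 2).choose (k - 2) := by
  have h := count_supersets (α := Fin n) k {i, j} ?_
  · rw [Finset.card_insert_of_notMem (by simpa using hij), Finset.card_singleton,
      Fintype.card_fin] at h
    rw [← h]
    congr 1
    apply Finset.filter_congr
    intro a _
    simp [Finset.insert_subset_iff]
  · rw [Finset.card_insert_of_notMem (by simpa using hij), Finset.card_singleton]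
    exact hk

lemma sum_mem_powersetCard {n k : ℕ} (hk : 1 ≤ k) (g : Fin n → ℝ) :
    ∑ a ∈ Finset.powersetCard k (Finset.univ : Finset (Fin n)), ∑ i ∈ a, g i
      = ((n - 1).choose (k - 1) : ℝ) * ∑ i, g i := by
  have h1 : ∀ a ∈ Finset.powersetCard k (Finset.univ : Finset (Fin n)),
      ∑ i ∈ a, g i = ∑ i : Fin n, if i ∈ a then g i else 0 := by
    intro a _
    rw [Finset.sum_ite_mem, Finset.univ_inter]
  rw [Finset.sum_congr rfl h1, Finset.sum_comm, Finset.mul_sum]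
  refine Finset.sum_congr rfl fun i _ => ?_
  rw [← Finset.sum_filter, Finset.sum_const, filter_mem_card hk i, nsmul_eq_mul]

lemma sum_sq_powersetCard {n k : ℕ} (hk : 2 ≤ k) (x : Fin n → ℝ) :
    ∑ a ∈ Finset.powersetCard k (Finset.univ : Finset (Fin n)), (∑ i ∈ a, x i) ^ 2
      = (((n - 1).choose (k - 1) : ℝ) - ((n - 2).choose (k - 2) : ℝ)) * ∑ i, x i ^ 2
        + ((n - 2).choose (k - 2) : ℝ) * (∑ i, x i) ^ 2 := by
  classical
  set P := Finset.powersetCard k (Finset.univ : Finset (Fin n)) with hP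
  have h1 : ∀ a ∈ P, (∑ i ∈ a, x i) ^ 2
      = ∑ i : Fin n, ∑ j : Fin n, if i ∈ a ∧ j ∈ a then x i * x j else 0 := by
    intro a _
    rw [sq, Finset.sum_mul_sum]
    rw [← Finset.sum_subset (Finset.subset_univ a) (by intro i _ hi; simp [hi])]
    refine Finset.sum_congr rfl fun i hi => ?_
    rw [← Finset.sum_subset (Finset.subset_univ a) (by intro j _ hj; simp [hi, hj])]
    exact Finset.sum_congr rfl fun j hj => by simp [hi, hj]
  rw [Finset.sum_congr rfl h1, Finset.sum_comm]
  have h2 : ∀ i : Fin n,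
      (∑ a ∈ P, ∑ j : Fin n, if i ∈ a ∧ j ∈ a then x i * x j else 0)
        = ∑ j : Fin n, (((P.filter (fun a => i ∈ a ∧ j ∈ a)).card : ℝ)) * (x i * x j) := by
    intro i
    rw [Finset.sum_comm]
    refine Finset.sum_congr rfl fun j _ => ?_
    rw [← Finset.sum_filter, Finset.sum_const, nsmul_eq_mul]
  rw [Finset.sum_congr rfl fun i _ => h2 i]
  have h3 : ∀ i j : Fin n, ((P.filter (fun a => i ∈ a ∧ j ∈ a)).card : ℝ)
      = if i = j then ((n - 1).choose (k - 1) : ℝ) else ((n - 2).choose (k - 2) : ℝ) := by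
    intro i j
    by_cases hij : i = j
    · subst hij
      rw [if_pos rfl]
      have e : P.filter (fun a => i ∈ a ∧ i ∈ a) = P.filter (fun a => i ∈ a) := by
        simp
      rw [e, filter_mem_card (le_trans one_le_two hk) i]
    · rw [if_neg hij, filter_pair_card hk hij]
  have h4 : ∀ i : Fin n, ∑ j : Fin n,
      (((P.filter (fun a => i ∈ a ∧ j ∈ a)).card : ℝ)) * (x i * x j)
        = (((n - 1).choose (k - 1) : ℝ) - ((n - 2).choose (k - 2) : ℝ)) * (x i ^ 2)
          + ((n - 2).choose (k - 2) : ℝ) * (x i * ∑ j, x j) := by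
    intro i
    rw [Finset.mul_sum]
    have : ∀ j : Fin n, (((P.filter (fun a => i ∈ a ∧ j ∈ a)).card : ℝ)) * (x i * x j)
        = (if i = j then (((n - 1).choose (k - 1) : ℝ) - ((n - 2).choose (k - 2) : ℝ))
            * (x i ^ 2) else 0) + ((n - 2).choose (k - 2) : ℝ) * (x i * x j) := by
      intro j
      rw [h3 i j]
      by_cases hij : i = j
      · subst hij; simp; ring
      · simp [hij]
    rw [Finset.sum_congr rfl fun j _ => this j, Finset.sum_add_distrib,
      Finset.sum_ite_eq (Finset.univ : Finset (Fin n)) i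
        (fun _ => (((n - 1).choose (k - 1) : ℝ) - ((n - 2).choose (k - 2) : ℝ)) * (x i ^ 2))]
    simp [Finset.mul_sum]
  rw [Finset.sum_congr rfl fun i _ => h4 i, Finset.sum_add_distrib, ← Finset.mul_sum,
    ← Finset.mul_sum, ← Finset.sum_mul, sq (∑ i, x i)]

lemma choose_id1 {n k : ℕ} (hk : 1 ≤ k) (hn : k ≤ n) :
    n * (n - 1).choose (k - 1) = n.choose k * k := by
  obtain ⟨a, rfl⟩ : ∃ a, n = a + 1 := ⟨n - 1, by omega⟩
  obtain ⟨b, rfl⟩ : ∃ b, k = b + 1 := ⟨k - 1, by omega⟩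
  simpa using Nat.add_one_mul_choose_eq a b

lemma choose_id2 {n k : ℕ} (hk : 2 ≤ k) (hn : k ≤ n) :
    (n - 1) * (n - 2).choose (k - 2) = (n - 1).choose (k - 1) * (k - 1) := by
  obtain ⟨a, rfl⟩ : ∃ a, n = a + 2 := ⟨n - 2, by omega⟩
  obtain ⟨b, rfl⟩ : ∃ b, k = b + 2 := ⟨k - 2, by omega⟩
  simpa using Nat.add_one_mul_choose_eq a b

lemma avgStep_sum_sq_single {n k : ℕ} (hk : 1 ≤ k) (a : Finset (Fin n)) (ha : a.card = k)
    (x : Fin n → ℝ) :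
    ∑ i, (avgStep k a x i) ^ 2
      = (∑ j ∈ a, x j) ^ 2 / k + (∑ i, x i ^ 2 - ∑ i ∈ a, x i ^ 2) := by
  have hsplit := Finset.sum_sdiff (f := fun i => (avgStep k a x i) ^ 2)
    (Finset.subset_univ a)
  rw [← hsplit]
  have h1 : ∑ i ∈ Finset.univ \ a, (avgStep k a x i) ^ 2
      = ∑ i ∈ Finset.univ \ a, x i ^ 2 := by
    refine Finset.sum_congr rfl fun i hi => ?_
    rw [Finset.mem_sdiff] at hi
    simp [avgStep, hi.2]
  have h2 : ∑ i ∈ a, (avgStep k a x i) ^ 2 = (∑ j ∈ a, x j) ^ 2 / k := by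
    have : ∀ i ∈ a, (avgStep k a x i) ^ 2 = ((∑ j ∈ a, x j) / k) ^ 2 := by
      intro i hi; simp [avgStep, hi]
    rw [Finset.sum_congr rfl this, Finset.sum_const, ha, nsmul_eq_mul]
    have hk0 : (k : ℝ) ≠ 0 := by positivity
    field_simp
  have h3 : ∑ i ∈ Finset.univ \ a, x i ^ 2 = ∑ i, x i ^ 2 - ∑ i ∈ a, x i ^ 2 := by
    have := Finset.sum_sdiff (f := fun i => x i ^ 2) (Finset.subset_univ a)
    linarith
  rw [h1, h2, h3]
  ring

lemma avg_sum_sq {n k : ℕ} (hk : 2 ≤ k) (hn : k < n) (x : Fin n → ℝ) (hx : ∑ i, x i = 0) :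
    ∑ a ∈ Finset.powersetCard k (Finset.univ : Finset (Fin n)), ∑ i, (avgStep k a x i) ^ 2
      = (n.choose k : ℝ) * ((1 - ((k : ℝ) - 1) / ((n : ℝ) - 1)) * ∑ i, x i ^ 2) := by
  set P := Finset.powersetCard k (Finset.univ : Finset (Fin n)) with hP
  have hsingle : ∀ a ∈ P, ∑ i, (avgStep k a x i) ^ 2
      = (∑ j ∈ a, x j) ^ 2 / k + (∑ i, x i ^ 2 - ∑ i ∈ a, x i ^ 2) := by
    intro a ha
    rw [Finset.mem_powersetCard] at ha
    exact avgStep_sum_sq_single (by omega) a ha.2 x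
  rw [Finset.sum_congr rfl hsingle, Finset.sum_add_distrib, Finset.sum_sub_distrib]
  have hcardP : (P.card : ℝ) = (n.choose k : ℝ) := by
    rw [hP, Finset.card_powersetCard, Finset.card_univ, Fintype.card_fin]
  have hA : ∑ a ∈ P, (∑ j ∈ a, x j) ^ 2 / k
      = ((((n - 1).choose (k - 1) : ℝ) - ((n - 2).choose (k - 2) : ℝ)) * ∑ i, x i ^ 2) / k := by
    rw [← Finset.sum_div, sum_sq_powersetCard hk x, hx]
    ring_nf
  have hB : ∑ a ∈ P, (∑ i, x i ^ 2) = (n.choose k : ℝ) * ∑ i, x i ^ 2 := by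
    rw [Finset.sum_const, nsmul_eq_mul, hcardP]
  have hC : ∑ a ∈ P, ∑ i ∈ a, x i ^ 2
      = ((n - 1).choose (k - 1) : ℝ) * ∑ i, x i ^ 2 :=
    sum_mem_powersetCard (by omega) _
  rw [hA, hB, hC]
  -- now pure algebra
  have hn0 : (n : ℝ) ≠ 0 := by
    have : 0 < n := by omega
    exact_mod_cast this.ne'
  have hn1 : (n : ℝ) - 1 ≠ 0 := by
    have : (2 : ℝ) ≤ (n : ℝ) := by exact_mod_cast by omega
    linarith
  have hk0 : (k : ℝ) ≠ 0 := by
    have : 0 < k := by omega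
    exact_mod_cast this.ne'
  have e1 : (n : ℝ) * ((n - 1).choose (k - 1) : ℝ) = (n.choose k : ℝ) * k := by
    exact_mod_cast congrArg (Nat.cast : ℕ → ℝ) (choose_id1 (by omega) (le_of_lt hn))
  have e2 : ((n : ℝ) - 1) * ((n - 2).choose (k - 2) : ℝ)
      = ((n - 1).choose (k - 1) : ℝ) * ((k : ℝ) - 1) := by
    have := congrArg (Nat.cast : ℕ → ℝ) (choose_id2 hk (le_of_lt hn))
    push_cast [Nat.cast_sub (by omega : 1 ≤ n), Nat.cast_sub (by omega : 1 ≤ k)] at this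
    linarith
  have h1 : ((n - 1).choose (k - 1) : ℝ) = (k : ℝ) * (n.choose k : ℝ) / n := by
    field_simp
    linarith
  have h2 : ((n - 2).choose (k - 2) : ℝ)
      = ((k : ℝ) - 1) * ((k : ℝ) * (n.choose k : ℝ) / n) / ((n : ℝ) - 1) := by
    rw [← h1]
    field_simp
    linarith
  rw [h1, h2]
  field_simp
  ring

lemma measurable_proc {Ω : Type*} [MeasurableSpace Ω] {n : ℕ} (k : ℕ) (x0 : Fin n → ℝ)
    (A : ℕ → Ω → Finset (Fin n)) (hmeas : ∀ m, Measurable (A m)) :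
    ∀ m, Measurable (fun ω => proc k x0 A ω m) := by
  intro m
  induction m with
  | zero => exact measurable_const
  | succ m ih =>
    have hAi : ∀ i : Fin n, MeasurableSet {ω | i ∈ A m ω} := fun i =>
      hmeas m (show MeasurableSet {s : Finset (Fin n) | i ∈ s} from trivial)
    apply measurable_pi_lambda
    intro i
    have hsum : Measurable (fun ω =>
        (∑ j : Fin n, if j ∈ A m ω then proc k x0 A ω m j else 0) / (k : ℝ)) := by
      apply Measurable.div_const
      apply Finset.measurable_sum
      intro j _
      exact Measurable.ite (hAi j) ((measurable_pi_apply j).comp ih) measurable_const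
    have heq : (fun ω => proc k x0 A ω (m + 1) i)
        = fun ω => if i ∈ A m ω then
            (∑ j : Fin n, if j ∈ A m ω then proc k x0 A ω m j else 0) / (k : ℝ)
          else proc k x0 A ω m i := by
      funext ω
      show avgStep k (A m ω) (proc k x0 A ω m) i = _
      by_cases hia : i ∈ A m ω
      · simp only [avgStep, if_pos hia]
        rw [← Finset.univ_inter (A m ω), ← Finset.sum_ite_mem]
        simp
      · simp [avgStep, hia]
    rw [heq]
    exact Measurable.ite (hAi i) hsum ((measurable_pi_apply i).comp ih)

lemma integrable_comp_tuple {Ω : Type*} [MeasurableSpace Ω] {n : ℕ}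
    (μ : MeasureTheory.Measure Ω) [IsProbabilityMeasure μ]
    (A : ℕ → Ω → Finset (Fin n)) (hmeas : ∀ m, Measurable (A m)) (m : ℕ)
    (ψ : (Fin m → Finset (Fin n)) → ℝ) :
    Integrable (fun ω => ψ (fun i => A i ω)) μ := by
  have hT : Measurable (fun ω => (fun i : Fin m => A (i : ℕ) ω)) :=
    measurable_pi_lambda _ (fun i => hmeas i)
  have hψ : Measurable ψ := measurable_of_finite ψ
  have hmeasf : Measurable (fun ω => ψ (fun i => A (i : ℕ) ω)) := hψ.comp hT
  refine (integrable_const (∑ t : Fin m → Finset (Fin n), |ψ t|)).mono'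
    hmeasf.aestronglyMeasurable ?_
  refine Filter.Eventually.of_forall fun ω => ?_
  rw [Real.norm_eq_abs]
  exact Finset.single_le_sum (f := fun t => |ψ t|) (fun t _ => abs_nonneg _) (Finset.mem_univ _)

end Aux

/-- For the `k`-averaging process started from a mean-zero vector,
`E[S_n(l+1) | F_l] = (1 - (k-1)/(n-1)) S_n(l)` almost surely. -/
theorem averaging_condexp_sq_sum
    (n k : ℕ) (hk : 2 ≤ k) (hn : k < n)
    (Ω : Type*) [MeasurableSpace Ω]
    (μ : Measure Ω) [IsProbabilityMeasure μ]
    (A : ℕ → Ω → Finset (Fin n))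
    (hmeas : ∀ m, Measurable (A m))
    (hindep : iIndepFun A μ)
    (hunif : ∀ (m : ℕ) (s : Finset (Fin n)),
      μ (A m ⁻¹' {s}) = if s.card = k then ((n.choose k : ENNReal))⁻¹ else 0)
    (x0 : Fin n → ℝ) (hx0 : ∑ i, x0 i = 0) (l : ℕ) :
    μ[(fun ω => ∑ i, (proc k x0 A ω (l + 1) i) ^ 2) | procFiltration k x0 A l]
      =ᵐ[μ] fun ω => (1 - ((k : ℝ) - 1) / ((n : ℝ) - 1)) * ∑ i, (proc k x0 A ω l i) ^ 2 := by
  classical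
  have hk1 : 1 ≤ k := by omega
  set c : ℝ := 1 - ((k : ℝ) - 1) / ((n : ℝ) - 1) with hc
  set f1 : Ω → ℝ := fun ω => ∑ i, (proc k x0 A ω (l + 1) i) ^ 2 with hf1def
  set g1 : Ω → ℝ := fun ω => c * ∑ i, (proc k x0 A ω l i) ^ 2 with hg1def
  have hproc := measurable_proc k x0 A hmeas
  have hm : procFiltration k x0 A l ≤ (inferInstance : MeasurableSpace Ω) :=
    iSup₂_le fun m _ => measurable_iff_comap_le.mp (hproc m)
  haveI : SigmaFinite (μ.trim hm) := by
    haveI := isFiniteMeasure_trim (μ := μ) hm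
    infer_instance
  set T : Ω → (Fin l → Finset (Fin n)) := fun ω i => A (i : ℕ) ω with hT
  have hTmeas : ∀ t : Fin l → Finset (Fin n), MeasurableSet (T ⁻¹' {t}) := by
    intro t
    have : T ⁻¹' {t} = ⋂ i : Fin l, A (i : ℕ) ⁻¹' {t i} := by
      ext ω
      simp only [Set.mem_preimage, Set.mem_singleton_iff, Set.mem_iInter, hT, funext_iff]
    rw [this]
    exact MeasurableSet.iInter fun i =>
      hmeas (i : ℕ) (show MeasurableSet {t i} from trivial)
  -- integrability
  have hint_f1 : Integrable f1 μ := by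
    have hrepr : f1 = fun ω =>
        (fun tt : Fin (l + 1) → Finset (Fin n) =>
          ∑ i, (detProc k x0 (fun j => if h : j < l + 1 then tt ⟨j, h⟩ else ∅) (l + 1) i) ^ 2)
          (fun i : Fin (l + 1) => A (i : ℕ) ω) := by
      funext ω
      simp only [hf1def]
      have hfun : detProc k x0 (fun i => A i ω) (l + 1)
          = detProc k x0 (fun j => if h : j < l + 1 then
              (fun i : Fin (l + 1) => A (i : ℕ) ω) ⟨j, h⟩ else ∅) (l + 1) :=
        detProc_congr k x0 (l + 1) (fun i hi => by simp only [dif_pos hi])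
      rw [proc_eq_detProc k x0 A ω (l + 1), hfun]
    rw [hrepr]
    exact integrable_comp_tuple μ A hmeas (l + 1)
      (fun tt => ∑ i, (detProc k x0 (fun j => if h : j < l + 1 then tt ⟨j, h⟩ else ∅)
        (l + 1) i) ^ 2)
  have hint_g1 : Integrable g1 μ := by
    have hrepr : g1 = fun ω =>
        (fun tt : Fin l → Finset (Fin n) =>
          c * ∑ i, (detProc k x0 (fun j => if h : j < l then tt ⟨j, h⟩ else ∅) l i) ^ 2)
          (fun i : Fin l => A (i : ℕ) ω) := by
      funext ω
      simp only [hg1def]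
      have hfun : detProc k x0 (fun i => A i ω) l
          = detProc k x0 (fun j => if h : j < l then
              (fun i : Fin l => A (i : ℕ) ω) ⟨j, h⟩ else ∅) l :=
        detProc_congr k x0 l (fun i hi => by simp only [dif_pos hi])
      rw [proc_eq_detProc k x0 A ω l, hfun]
    rw [hrepr]
    exact integrable_comp_tuple μ A hmeas l
      (fun tt => c * ∑ i, (detProc k x0 (fun j => if h : j < l then tt ⟨j, h⟩ else ∅) l i) ^ 2)
  -- independence product
  have hprod : ∀ (t : Fin l → Finset (Fin n)) (a : Finset (Fin n)),
      μ (T ⁻¹' {t} ∩ A l ⁻¹' {a}) = μ (T ⁻¹' {t}) * μ (A l ⁻¹' {a}) := by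
    intro t a
    set sets : ℕ → Set (Finset (Fin n)) := fun i => if h : i < l then {t ⟨i, h⟩} else {a}
      with hsets
    have hbig := hindep.measure_inter_preimage_eq_mul (S := Finset.range (l + 1))
      (sets := sets) (fun i _ => trivial)
    have hsmall := hindep.measure_inter_preimage_eq_mul (S := Finset.range l)
      (sets := sets) (fun i _ => trivial)
    have hTt : (⋂ i ∈ Finset.range l, A i ⁻¹' sets i) = T ⁻¹' {t} := by
      ext ω
      simp only [Set.mem_iInter, Finset.mem_range, Set.mem_preimage, Set.mem_singleton_iff,
        hT, funext_iff]
      constructor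
      · intro h j
        have hj := h (j : ℕ) j.isLt
        rw [hsets] at hj
        simp only [dif_pos j.isLt] at hj
        simpa using hj
      · intro h i hi
        rw [hsets]
        simp only [dif_pos hi, Set.mem_singleton_iff]
        exact h ⟨i, hi⟩
    have hsplit : (⋂ i ∈ Finset.range (l + 1), A i ⁻¹' sets i)
        = (⋂ i ∈ Finset.range l, A i ⁻¹' sets i) ∩ A l ⁻¹' {a} := by
      rw [Finset.range_add_one, Finset.set_biInter_insert, Set.inter_comm]
      congr 1
      rw [hsets]
      simp
    rw [← hTt, ← hsplit, hbig, Finset.prod_range_succ, ← hsmall]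
    congr 1
    rw [hsets]
    simp
  -- per-atom equality of integrals
  have hatom : ∀ t : Fin l → Finset (Fin n),
      ∫ ω in T ⁻¹' {t}, g1 ω ∂μ = ∫ ω in T ⁻¹' {t}, f1 ω ∂μ := by
    intro t
    rcases eq_or_ne (μ (T ⁻¹' {t})) 0 with h0 | h0
    · rw [Measure.restrict_eq_zero.mpr h0]
      simp
    · have hcards : ∀ i : Fin l, (t i).card = k := by
        intro i
        by_contra hne
        have hsub : T ⁻¹' {t} ⊆ (A (i : ℕ)) ⁻¹' {t i} := by
          intro ω hω
          have hωt : T ω = t := hω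
          simp only [Set.mem_preimage, Set.mem_singleton_iff]
          exact congrFun hωt i
        have hle := measure_mono (μ := μ) hsub
        rw [hunif (i : ℕ) (t i), if_neg hne] at hle
        exact h0 (le_antisymm hle zero_le)
      set tx : ℕ → Finset (Fin n) := fun i => if h : i < l then t ⟨i, h⟩ else ∅ with htx
      set y : Fin n → ℝ := detProc k x0 tx l with hy
      have hprocl : ∀ ω ∈ T ⁻¹' {t}, proc k x0 A ω l = y := by
        intro ω hω
        have hωt : T ω = t := hω
        rw [hy, proc_eq_detProc]
        apply detProc_congr
        intro i hi
        rw [htx]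
        simp only [dif_pos hi]
        exact congrFun hωt ⟨i, hi⟩
      have hsumy : ∑ i, y i = 0 := by
        apply detProc_sum_zero hk1 x0 hx0
        intro i hi
        rw [htx]
        simp only [dif_pos hi]
        exact hcards ⟨i, hi⟩
      set S : ℝ := ∑ i, y i ^ 2 with hS
      have hR : ∫ ω in T ⁻¹' {t}, g1 ω ∂μ = (μ (T ⁻¹' {t})).toReal * (c * S) := by
        rw [setIntegral_congr_fun (hTmeas t) (g := fun _ => c * S)
          (fun ω hω => by simp only [hg1def]; rw [hprocl ω hω]),
          setIntegral_const, smul_eq_mul]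
        rfl
      set φ : Finset (Fin n) → ℝ := fun a => ∑ i, (avgStep k a y i) ^ 2 with hφ
      have hL1 : Set.EqOn f1 (fun ω => φ (A l ω)) (T ⁻¹' {t}) := by
        intro ω hω
        simp only [hf1def, hφ]
        show ∑ i, (avgStep k (A l ω) (proc k x0 A ω l) i) ^ 2 = _
        rw [hprocl ω hω]
      have hL : ∫ ω in T ⁻¹' {t}, f1 ω ∂μ
          = ∑ a : Finset (Fin n), φ a * (μ (T ⁻¹' {t} ∩ A l ⁻¹' {a})).toReal := by
        rw [setIntegral_congr_fun (hTmeas t) hL1]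
        have hrep : ∀ ω, φ (A l ω)
            = ∑ a : Finset (Fin n), Set.indicator (A l ⁻¹' {a}) (fun _ => φ a) ω := by
          intro ω
          simp only [Set.indicator_apply, Set.mem_preimage, Set.mem_singleton_iff]
          rw [Finset.sum_ite_eq]
          simp
        calc ∫ ω in T ⁻¹' {t}, φ (A l ω) ∂μ
            = ∫ ω in T ⁻¹' {t},
                (∑ a : Finset (Fin n), Set.indicator (A l ⁻¹' {a}) (fun _ => φ a) ω) ∂μ := by
              exact integral_congr_ae (Filter.Eventually.of_forall fun ω => hrep ω)
          _ = ∑ a : Finset (Fin n),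
                ∫ ω in T ⁻¹' {t}, Set.indicator (A l ⁻¹' {a}) (fun _ => φ a) ω ∂μ := by
              apply integral_finset_sum
              intro a _
              exact ((integrable_const (φ a)).indicator
                (hmeas l (show MeasurableSet {a} from trivial))).integrableOn
          _ = ∑ a : Finset (Fin n), φ a * (μ (T ⁻¹' {t} ∩ A l ⁻¹' {a})).toReal := by
              refine Finset.sum_congr rfl fun a _ => ?_
              rw [setIntegral_indicator (hmeas l (show MeasurableSet {a} from trivial)),
                setIntegral_const, smul_eq_mul, mul_comm]
              rfl
      have hC0 : (n.choose k : ℝ) ≠ 0 := by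
        have := Nat.choose_pos (le_of_lt hn)
        exact_mod_cast this.ne'
      have hLfinal : ∫ ω in T ⁻¹' {t}, f1 ω ∂μ = (μ (T ⁻¹' {t})).toReal * (c * S) := by
        rw [hL]
        have hterm : ∀ a : Finset (Fin n),
            φ a * (μ (T ⁻¹' {t} ∩ A l ⁻¹' {a})).toReal
              = (μ (T ⁻¹' {t})).toReal
                * (if a.card = k then ((n.choose k : ℝ))⁻¹ * φ a else 0) := by
          intro a
          rw [hprod t a, ENNReal.toReal_mul, hunif l a]
          by_cases hak : a.card = k
          · rw [if_pos hak, if_pos hak, ENNReal.toReal_inv]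
            rw [show ((n.choose k : ENNReal)).toReal = (n.choose k : ℝ) by simp]
            ring
          · rw [if_neg hak, if_neg hak]
            simp
        rw [Finset.sum_congr rfl (fun a _ => hterm a), ← Finset.mul_sum]
        congr 1
        rw [← Finset.sum_filter]
        have hPP : Finset.univ.filter (fun a : Finset (Fin n) => a.card = k)
            = Finset.powersetCard k Finset.univ := by
          ext a
          simp [Finset.mem_powersetCard, Finset.subset_univ]
        rw [hPP, ← Finset.mul_sum, hφ]
        rw [show (∑ a ∈ Finset.powersetCard k (Finset.univ : Finset (Fin n)),
              ∑ i, (avgStep k a y i) ^ 2) = (n.choose k : ℝ) * (c * S) from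
          avg_sum_sq hk hn y hsumy]
        rw [inv_mul_cancel_left₀ hC0]
      rw [hR, hLfinal]
    -- end hatom
  refine (ae_eq_condExp_of_forall_setIntegral_eq hm hint_f1
    (fun s _ _ => hint_g1.integrableOn) ?_ ?_).symm
  · intro s hsF _
    have hFG : procFiltration k x0 A l ≤ MeasurableSpace.comap T ⊤ := by
      refine iSup₂_le fun m hmle => ?_
      rw [Set.mem_Iic] at hmle
      have hrep : (fun ω => proc k x0 A ω m)
          = (fun tt : Fin l → Finset (Fin n) =>
              detProc k x0 (fun i => if h : i < l then tt ⟨i, h⟩ else ∅) m) ∘ T := by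
        funext ω
        simp only [Function.comp_apply]
        rw [proc_eq_detProc]
        exact detProc_congr k x0 m
          (fun i hi => by simp only [dif_pos (lt_of_lt_of_le hi hmle)]; rfl)
      rw [hrep, ← MeasurableSpace.comap_comp]
      exact MeasurableSpace.comap_mono le_top
    obtain ⟨B, -, hB⟩ := MeasurableSpace.measurableSet_comap.mp (hFG s hsF)
    have hBun : T ⁻¹' B = ⋃ t ∈ (Set.toFinite B).toFinset, T ⁻¹' {t} := by
      ext ω
      simp only [Set.mem_preimage, Set.mem_iUnion, Set.Finite.mem_toFinset,
        Set.mem_singleton_iff]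
      constructor
      · intro h
        exact ⟨T ω, h, rfl⟩
      · rintro ⟨t, ht, h⟩
        have : T ω = t := h
        rw [this]
        exact ht
    have hdisj : Set.Pairwise ↑((Set.toFinite B).toFinset)
        (Function.onFun Disjoint fun t => T ⁻¹' {t}) := by
      intro t1 _ t2 _ hne
      refine Set.disjoint_left.mpr fun ω h1 h2 => hne ?_
      have e1 : T ω = t1 := h1
      have e2 : T ω = t2 := h2
      rw [← e1, e2]
    rw [← hB, hBun,
      integral_biUnion_finset _ (fun t _ => hTmeas t) hdisj (fun t _ => hint_g1.integrableOn),
      integral_biUnion_finset _ (fun t _ => hTmeas t) hdisj (fun t _ => hint_f1.integrableOn)]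
    exact Finset.sum_congr rfl fun t _ => hatom t
  · have hFle : MeasurableSpace.comap (fun ω => proc k x0 A ω l) inferInstance
        ≤ procFiltration k x0 A l :=
      le_iSup₂ (f := fun m (_ : m ∈ Set.Iic l) =>
        MeasurableSpace.comap (fun ω => proc k x0 A ω m) inferInstance) l Set.self_mem_Iic
    have hmeasF : Measurable[procFiltration k x0 A l] (fun ω => proc k x0 A ω l) :=
      measurable_iff_comap_le.mpr hFle
    have hgm : Measurable[procFiltration k x0 A l] g1 := by
      have houter : Measurable (fun x : Fin n → ℝ => c * ∑ i, x i ^ 2) := by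
        apply Measurable.const_mul
        exact Finset.measurable_sum _ (fun i _ => (measurable_pi_apply i).pow_const 2)
      exact houter.comp hmeasF
    exact hgm.stronglyMeasurable.aestronglyMeasurable

end
end

section
/- Let n > k ≥ 2 be integers and let x ∈ ℝ^n satisfy ∑_{i=1}^n x_i = 0. Let A be a uniformly random k-element subset of {1, …, n}, and let y ∈ ℝ^n be obtained from x by setting y_i = (1/k)∑_{j∈A} x_j for i ∈ A and y_i = x_i otherwise. Then E[∑_{i=1}^n y_i²] = (1 − (k−1)/(n−1)) · ∑_{i=1}^n x_i². -/
open Finset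

section Aux

lemma card_filter_supersets {α : Type*} [DecidableEq α] (s B : Finset α) (hB : B ⊆ s) (k : ℕ)
    (hm : B.card ≤ k) :
    ((powersetCard k s).filter (fun A => B ⊆ A)).card = (s.card - B.card).choose (k - B.card) := by
  rw [← card_sdiff_of_subset hB, ← card_powersetCard (k - B.card) (s \ B)]
  apply card_bij' (fun A _ => A \ B) (fun C _ => C ∪ B)
  · intro A hA
    simp only [mem_filter, mem_powersetCard] at hA
    obtain ⟨⟨hAs, hAc⟩, hBA⟩ := hA
    rw [mem_powersetCard]
    exact ⟨sdiff_subset_sdiff hAs (le_refl B), by rw [card_sdiff_of_subset hBA, hAc]⟩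
  · intro C hC
    rw [mem_powersetCard] at hC
    obtain ⟨hCs, hCc⟩ := hC
    have hdisj : Disjoint C B := (sdiff_disjoint.mono_left hCs)
    simp only [mem_filter, mem_powersetCard]
    refine ⟨⟨union_subset (hCs.trans (sdiff_subset)) hB, ?_⟩, subset_union_right⟩
    rw [card_union_of_disjoint hdisj, hCc]
    omega
  · intro A hA
    simp only [mem_filter] at hA
    exact sdiff_union_of_subset hA.2
  · intro C hC
    rw [mem_powersetCard] at hC
    have hdisj : Disjoint C B := (sdiff_disjoint.mono_left hC.1)
    exact union_sdiff_cancel_right hdisj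

variable {n k : ℕ}

lemma count_one (hk : 1 ≤ k) (i : Fin n) :
    ((powersetCard k (univ : Finset (Fin n))).filter (fun A => i ∈ A)).card
      = (n - 1).choose (k - 1) := by
  have := card_filter_supersets (univ : Finset (Fin n)) {i} (by simp) k (by simpa)
  simpa using this

lemma count_two (hk : 2 ≤ k) (i j : Fin n) (hij : i ≠ j) :
    ((powersetCard k (univ : Finset (Fin n))).filter (fun A => i ∈ A ∧ j ∈ A)).card
      = (n - 2).choose (k - 2) := by
  have h2 : ({i, j} : Finset (Fin n)).card = 2 := by
    rw [card_insert_of_notMem (by simpa), card_singleton]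
  have := card_filter_supersets (univ : Finset (Fin n)) {i, j} (by simp) k (by omega)
  rw [h2, card_univ, Fintype.card_fin] at this
  rw [← this]
  congr 1
  apply filter_congr
  intro A _
  simp [insert_subset_iff]

end Aux

noncomputable section

/-- For a mean-zero vector `x`, averaging a uniformly random `k`-subset of the
coordinates contracts the expected sum of squares by the factor `1 - (k-1)/(n-1)`. -/
theorem averaging_expected_sq_sum_zero_mean
    (n k : ℕ) (hk : 2 ≤ k) (hn : k < n)
    (x : Fin n → ℝ) (hx : ∑ i, x i = 0) :
    (∑ A ∈ powersetCard k (univ : Finset (Fin n)), ∑ i, (avgStep k A x i) ^ 2)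
        / (n.choose k : ℝ)
      = (1 - ((k : ℝ) - 1) / ((n : ℝ) - 1)) * ∑ i, (x i) ^ 2 := by
  simp only [avgStep]
  set S : ℝ := ∑ i, (x i) ^ 2 with hS
  set P := powersetCard k (univ : Finset (Fin n)) with hP
  have hk0 : (k:ℝ) ≠ 0 := by positivity
  -- per-A simplification
  have step1 : ∀ A ∈ P, (∑ i, (if i ∈ A then (∑ j ∈ A, x j) / k else x i) ^ 2)
      = (∑ j ∈ A, x j)^2 / k + (S - ∑ i ∈ A, (x i)^2) := by
    intro A hA
    rw [hP, mem_powersetCard] at hA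
    have hcard : A.card = k := hA.2
    rw [← Finset.sum_add_sum_compl A]
    have h1 : ∑ i ∈ A, (if i ∈ A then (∑ j ∈ A, x j) / k else x i) ^ 2
        = (∑ j ∈ A, x j)^2 / k := by
      rw [Finset.sum_congr rfl (fun i hi => by rw [if_pos hi]), Finset.sum_const, hcard]
      field_simp
      ring_nf
      field_simp
    have h2 : ∑ i ∈ Aᶜ, (if i ∈ A then (∑ j ∈ A, x j) / k else x i) ^ 2
        = S - ∑ i ∈ A, (x i)^2 := by
      rw [Finset.sum_congr rfl (fun i hi => by rw [if_neg (by simpa using hi)])]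
      have := Finset.sum_add_sum_compl A (fun i => (x i)^2)
      linarith [this]
    rw [h1, h2]
  rw [Finset.sum_congr rfl step1]
  -- counting sums
  have E1 : ∑ A ∈ P, ∑ i ∈ A, (x i)^2 = ((n-1).choose (k-1) : ℝ) * S := by
    have h : ∀ A ∈ P, ∑ i ∈ A, (x i)^2 = ∑ i, if i ∈ A then (x i)^2 else 0 := by
      intro A _; rw [Finset.sum_ite_mem, univ_inter]
    rw [Finset.sum_congr rfl h, Finset.sum_comm]
    rw [hS, Finset.mul_sum]
    apply Finset.sum_congr rfl
    intro i _
    rw [Finset.sum_ite, Finset.sum_const, Finset.sum_const, smul_zero, add_zero,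
      count_one (by omega) i]
    simp [mul_comm]
  have E2 : ∑ A ∈ P, (∑ j ∈ A, x j)^2
      = (((n-1).choose (k-1) : ℝ) - ((n-2).choose (k-2) : ℝ)) * S := by
    have expand : ∀ A ∈ P, (∑ j ∈ A, x j)^2
        = ∑ i, ∑ j, if i ∈ A ∧ j ∈ A then x i * x j else 0 := by
      intro A _
      rw [sq, Finset.sum_mul_sum]
      have h : ∑ i : Fin n, ∑ j : Fin n, (if i ∈ A ∧ j ∈ A then x i * x j else 0)
          = ∑ i : Fin n, (if i ∈ A then ∑ j ∈ A, x i * x j else 0) := by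
        apply Finset.sum_congr rfl; intro i _
        by_cases hi : i ∈ A <;> simp [hi, Finset.sum_ite_mem]
      rw [h, Finset.sum_ite_mem, univ_inter]
    rw [Finset.sum_congr rfl expand]
    rw [Finset.sum_comm]
    have swap2 : ∀ i : Fin n, ∑ j : Fin n, ∑ A ∈ P, (if i ∈ A ∧ j ∈ A then x i * x j else 0)
        = ∑ j : Fin n, ((P.filter (fun A => i ∈ A ∧ j ∈ A)).card : ℝ) * (x i * x j) := by
      intro i
      apply Finset.sum_congr rfl; intro j _
      rw [← Finset.sum_filter, Finset.sum_const, nsmul_eq_mul]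
    have hrest : ∀ i : Fin n, ∑ j ∈ univ \ {i}, x j = - x i := by
      intro i
      have h := Finset.sum_eq_sum_sdiff_singleton_add (mem_univ i) x
      rw [hx] at h
      linarith
    have key : ∀ i : Fin n,
        ∑ j : Fin n, ((P.filter (fun A => i ∈ A ∧ j ∈ A)).card : ℝ) * (x i * x j)
        = (((n-1).choose (k-1) : ℝ) - ((n-2).choose (k-2) : ℝ)) * (x i)^2 := by
      intro i
      rw [Finset.sum_eq_sum_sdiff_singleton_add (mem_univ i)]
      have hoff : ∀ j ∈ univ \ {i},
          ((P.filter (fun A => i ∈ A ∧ j ∈ A)).card : ℝ) * (x i * x j)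
          = ((n-2).choose (k-2) : ℝ) * (x i * x j) := by
        intro j hj
        have hji : i ≠ j := by
          simp only [mem_sdiff, mem_singleton] at hj
          exact fun h => hj.2 h.symm
        rw [hP, count_two hk i j hji]
      rw [Finset.sum_congr rfl hoff]
      have hdiag : ((P.filter (fun A => i ∈ A ∧ i ∈ A)).card : ℝ)
          = ((n-1).choose (k-1) : ℝ) := by
        have heq : (P.filter (fun A => i ∈ A ∧ i ∈ A)) = P.filter (fun A => i ∈ A) := by
          apply filter_congr; intro A _; simp
        rw [heq, hP, count_one (by omega) i]
      rw [hdiag, ← Finset.mul_sum, ← Finset.mul_sum, hrest i]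
      ring
    rw [Finset.sum_congr rfl (fun i _ => (Finset.sum_comm).trans ((swap2 i).trans (key i)))]
    rw [hS, Finset.mul_sum]
  -- combine
  rw [Finset.sum_add_distrib, Finset.sum_sub_distrib, ← Finset.sum_div, E1, E2,
    Finset.sum_const, hP, card_powersetCard, card_univ, Fintype.card_fin]
  -- scalar arithmetic
  set a : ℝ := (n.choose k : ℝ) with ha
  set b : ℝ := ((n-1).choose (k-1) : ℝ) with hb
  set c : ℝ := ((n-2).choose (k-2) : ℝ) with hc
  have ha0 : a ≠ 0 := by
    rw [ha]
    exact Nat.cast_ne_zero.mpr (Nat.choose_pos (le_of_lt hn)).ne'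
  have hn0 : (n:ℝ) ≠ 0 := Nat.cast_ne_zero.mpr (by omega)
  have hn1 : (n:ℝ) - 1 ≠ 0 := by
    have : (3:ℝ) ≤ n := by exact_mod_cast (by omega : 3 ≤ n)
    linarith
  have hab : (k:ℝ) * a = (n:ℝ) * b := by
    rw [ha, hb]
    have h := Nat.add_one_mul_choose_eq (n-1) (k-1)
    rw [show n - 1 + 1 = n by omega, show k - 1 + 1 = k by omega] at h
    have h' : ((n : ℝ)) * ((n-1).choose (k-1) : ℝ) = ((n.choose k : ℝ)) * (k : ℝ) := by
      exact_mod_cast congrArg (fun m : ℕ => (m:ℝ)) h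
    linarith
  have hbc : ((k:ℝ) - 1) * b = ((n:ℝ) - 1) * c := by
    rw [hb, hc]
    have h := Nat.add_one_mul_choose_eq (n-2) (k-2)
    rw [show n - 2 + 1 = n - 1 by omega, show k - 2 + 1 = k - 1 by omega] at h
    have h' : ((n:ℝ) - 1) * ((n-2).choose (k-2)) = ((n-1).choose (k-1)) * ((k:ℝ) - 1) := by
      have hn' : ((n - 1 : ℕ) : ℝ) = (n:ℝ) - 1 := by
        have : (1:ℕ) ≤ n := by omega
        push_cast [this]; ring
      have hk' : ((k - 1 : ℕ) : ℝ) = (k:ℝ) - 1 := by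
        have : (1:ℕ) ≤ k := by omega
        push_cast [this]; ring
      rw [← hn', ← hk']
      exact_mod_cast h
    linarith
  have hbeq : b = (k:ℝ) * a / n := by field_simp; linarith
  have hceq : c = ((k:ℝ) - 1) * b / ((n:ℝ) - 1) := by field_simp; linarith
  rw [hceq, hbeq]
  field_simp
  ring

end
end

section
/- Let n > k ≥ 2 be integers and let x ∈ ℝ^n be any vector, with mean x̄ = (1/n)∑_{i=1}^n x_i. Let A be a uniformly random k-element subset of {1, …, n}, and let y ∈ ℝ^n be obtained from x by setting y_i = (1/k)∑_{j∈A} x_j for i ∈ A and y_i = x_i otherwise. Then E[∑_{i=1}^n (y_i − x̄)²] = (1 − (k−1)/(n−1)) · ∑_{i=1}^n (x_i − x̄)². -/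
open Finset

noncomputable section

lemma count_contains (n k : ℕ) (s : Finset (Fin n)) (hs : s.card ≤ k) :
    ((powersetCard k (univ : Finset (Fin n))).filter (fun A => s ⊆ A)).card
      = (n - s.card).choose (k - s.card) := by
  have : ((powersetCard k (univ : Finset (Fin n))).filter (fun A => s ⊆ A)).card
      = (powersetCard (k - s.card) (univ \ s)).card := by
    apply Finset.card_bij' (fun A _ => A \ s) (fun B _ => B ∪ s)
    · intro A hA
      simp only [mem_filter, mem_powersetCard_univ] at hA
      simp only [mem_powersetCard]
      exact ⟨sdiff_subset_sdiff (subset_univ _) le_rfl,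
        by rw [card_sdiff_of_subset hA.2, hA.1]⟩
    · intro B hB
      simp only [mem_powersetCard] at hB
      simp only [mem_filter, mem_powersetCard_univ]
      have hdisj : Disjoint B s := disjoint_of_subset_left hB.1 sdiff_disjoint
      constructor
      · rw [card_union_of_disjoint hdisj, hB.2]
        omega
      · exact subset_union_right
    · intro A hA
      simp only [mem_filter] at hA
      exact sdiff_union_of_subset hA.2
    · intro B hB
      simp only [mem_powersetCard] at hB
      have hdisj : Disjoint B s := disjoint_of_subset_left hB.1 sdiff_disjoint
      rw [union_sdiff_right, sdiff_eq_self_of_disjoint hdisj]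
  rw [this, card_powersetCard, card_sdiff_of_subset (subset_univ s), card_univ, Fintype.card_fin]

lemma count_mem (n k : ℕ) (hk : 1 ≤ k) (i : Fin n) :
    ((powersetCard k (univ : Finset (Fin n))).filter (fun A => i ∈ A)).card
      = (n - 1).choose (k - 1) := by
  have := count_contains n k {i} (by simpa using hk)
  simpa using this

lemma count_pair (n k : ℕ) (hk : 2 ≤ k) (i j : Fin n) (hij : i ≠ j) :
    ((powersetCard k (univ : Finset (Fin n))).filter (fun A => i ∈ A ∧ j ∈ A)).card
      = (n - 2).choose (k - 2) := by
  have hc : ({i, j} : Finset (Fin n)).card = 2 := card_pair hij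
  have := count_contains n k {i, j} (by rw [hc]; exact hk)
  rw [hc] at this
  rw [← this]
  congr 1
  apply filter_congr
  intro A _
  simp [insert_subset_iff]

lemma sum_T1 (n k : ℕ) (hk : 1 ≤ k) (f : Fin n → ℝ) :
    ∑ A ∈ powersetCard k (univ : Finset (Fin n)), ∑ i ∈ A, f i
      = ((n - 1).choose (k - 1) : ℝ) * ∑ i, f i := by
  have h1 : ∀ A : Finset (Fin n), ∑ i ∈ A, f i = ∑ i, if i ∈ A then f i else 0 := by
    intro A
    rw [sum_ite_mem, univ_inter]
  simp_rw [h1]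
  rw [Finset.sum_comm]
  rw [Finset.mul_sum]
  refine Finset.sum_congr rfl fun i _ => ?_
  rw [← sum_filter, sum_const, count_mem n k hk i, nsmul_eq_mul]
  simp

lemma sum_T2 (n k : ℕ) (hk : 2 ≤ k) (f : Fin n → ℝ) (hf : ∑ i, f i = 0) :
    ∑ A ∈ powersetCard k (univ : Finset (Fin n)), (∑ i ∈ A, f i) ^ 2
      = (((n - 1).choose (k - 1) : ℝ) - ((n - 2).choose (k - 2) : ℝ)) * ∑ i, f i ^ 2 := by
  have h1 : ∀ A : Finset (Fin n), (∑ i ∈ A, f i) ^ 2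
      = ∑ i, ∑ j, if i ∈ A ∧ j ∈ A then f i * f j else 0 := by
    intro A
    rw [sq, sum_mul_sum]
    calc (∑ i ∈ A, ∑ j ∈ A, f i * f j)
        = ∑ i ∈ A, ∑ j, if j ∈ A then f i * f j else 0 := by
          refine sum_congr rfl fun i _ => ?_
          rw [sum_ite_mem, univ_inter]
      _ = ∑ i, if i ∈ A then (∑ j, if j ∈ A then f i * f j else 0) else 0 := by
          rw [sum_ite_mem, univ_inter]
      _ = ∑ i, ∑ j, if i ∈ A ∧ j ∈ A then f i * f j else 0 := by
          refine sum_congr rfl fun i _ => ?_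
          by_cases hi : i ∈ A <;> simp [hi]
  simp_rw [h1]
  rw [Finset.sum_comm]
  have h2 : ∀ i : Fin n,
      ∑ A ∈ powersetCard k (univ : Finset (Fin n)), ∑ j, (if i ∈ A ∧ j ∈ A then f i * f j else 0)
      = ∑ j, (((powersetCard k (univ : Finset (Fin n))).filter
          (fun A => i ∈ A ∧ j ∈ A)).card : ℝ) * (f i * f j) := by
    intro i
    rw [Finset.sum_comm]
    refine sum_congr rfl fun j _ => ?_
    rw [← sum_filter, sum_const, nsmul_eq_mul]
  simp_rw [h2]
  have h3 : ∀ i : Fin n,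
      ∑ j, (((powersetCard k (univ : Finset (Fin n))).filter
          (fun A => i ∈ A ∧ j ∈ A)).card : ℝ) * (f i * f j)
      = (((n - 2).choose (k - 2) : ℝ)) * (f i * ∑ j, f j)
        + ((((n - 1).choose (k - 1) : ℝ)) - ((n - 2).choose (k - 2) : ℝ)) * f i ^ 2 := by
    intro i
    have : ∀ j : Fin n,
        (((powersetCard k (univ : Finset (Fin n))).filter
          (fun A => i ∈ A ∧ j ∈ A)).card : ℝ) * (f i * f j)
        = ((n - 2).choose (k - 2) : ℝ) * (f i * f j)
          + (if j = i then ((((n - 1).choose (k - 1) : ℝ)) - ((n - 2).choose (k - 2) : ℝ)) * f i ^ 2 else 0) := by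
      intro j
      by_cases hj : j = i
      · subst hj
        have : ((powersetCard k (univ : Finset (Fin n))).filter
            (fun A => j ∈ A ∧ j ∈ A)).card = (n - 1).choose (k - 1) := by
          rw [← count_mem n k (by omega) j]
          congr 1
          simp
        rw [this]
        simp [sq]
        ring
      · rw [count_pair n k hk i j (fun h => hj h.symm)]
        simp [hj]
    simp_rw [this]
    rw [sum_add_distrib, sum_ite_eq' univ i]
    simp [mul_sum]
  simp_rw [h3, hf]
  rw [sum_add_distrib, ← mul_sum]
  simp [mul_sum]

lemma perA {n : ℕ} (k : ℕ) (hk : 1 ≤ k) (x : Fin n → ℝ) (m : ℝ)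
    (A : Finset (Fin n)) (hA : A.card = k) :
    ∑ i, (avgStep k A x i - m) ^ 2
      = (∑ i, (x i - m) ^ 2) - (∑ i ∈ A, (x i - m) ^ 2)
        + (∑ i ∈ A, (x i - m)) ^ 2 / k := by
  have hk0 : (k : ℝ) ≠ 0 := Nat.cast_ne_zero.mpr (by omega)
  have key : ∀ i ∈ A, avgStep k A x i - m = (∑ j ∈ A, (x j - m)) / k := by
    intro i hi
    unfold avgStep
    rw [if_pos hi, sum_sub_distrib, sum_const, hA]
    field_simp
    rw [nsmul_eq_mul]
  rw [← sum_sdiff (subset_univ A), ← sum_sdiff (subset_univ A) (f := fun i => (x i - m)^2)]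
  have h1 : ∑ i ∈ (univ \ A), (avgStep k A x i - m) ^ 2
      = ∑ i ∈ (univ \ A), (x i - m) ^ 2 := by
    refine sum_congr rfl fun i hi => ?_
    have : i ∉ A := (mem_sdiff.mp hi).2
    unfold avgStep
    rw [if_neg this]
  have h2 : ∑ i ∈ A, (avgStep k A x i - m) ^ 2
      = (∑ j ∈ A, (x j - m)) ^ 2 / k := by
    calc ∑ i ∈ A, (avgStep k A x i - m) ^ 2
        = ∑ i ∈ A, ((∑ j ∈ A, (x j - m)) / k) ^ 2 :=
          sum_congr rfl fun i hi => by rw [key i hi]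
      _ = k * ((∑ j ∈ A, (x j - m)) / k) ^ 2 := by
          rw [sum_const, hA, nsmul_eq_mul]
      _ = (∑ j ∈ A, (x j - m)) ^ 2 / k := by field_simp
  rw [h1, h2]
  ring

/-- For an arbitrary vector `x` with mean `x̄`, averaging a uniformly random `k`-subset
of the coordinates contracts the expected sum of squared deviations from the mean by
the factor `1 - (k-1)/(n-1)`. -/
theorem averaging_expected_sq_sum_about_mean
    (n k : ℕ) (hk : 2 ≤ k) (hn : k < n)
    (x : Fin n → ℝ) :
    (∑ A ∈ powersetCard k (univ : Finset (Fin n)),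
        ∑ i, (avgStep k A x i - (∑ j, x j) / n) ^ 2) / (n.choose k : ℝ)
      = (1 - ((k : ℝ) - 1) / ((n : ℝ) - 1)) * ∑ i, (x i - (∑ j, x j) / n) ^ 2 := by
  have hk1 : 1 ≤ k := by omega
  have hn0 : (n : ℝ) ≠ 0 := Nat.cast_ne_zero.mpr (by omega)
  have hk0 : (k : ℝ) ≠ 0 := Nat.cast_ne_zero.mpr (by omega)
  have hn3 : (3 : ℝ) ≤ (n : ℝ) := by exact_mod_cast (by omega : 3 ≤ n)
  have hn1 : (n : ℝ) - 1 ≠ 0 := by linarith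
  set m : ℝ := (∑ j, x j) / n with hm
  set Q : ℝ := ∑ i, (x i - m) ^ 2 with hQ
  have hzsum : ∑ i, (x i - m) = 0 := by
    rw [sum_sub_distrib, sum_const, card_univ, Fintype.card_fin, nsmul_eq_mul, hm]
    field_simp
    ring
  have hnum : ∑ A ∈ powersetCard k (univ : Finset (Fin n)),
      ∑ i, (avgStep k A x i - m) ^ 2
      = (n.choose k : ℝ) * Q - ((n - 1).choose (k - 1) : ℝ) * Q
        + ((((n - 1).choose (k - 1) : ℝ) - ((n - 2).choose (k - 2) : ℝ)) * Q) / k := by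
    have hper : ∀ A ∈ powersetCard k (univ : Finset (Fin n)),
        ∑ i, (avgStep k A x i - m) ^ 2
          = Q - (∑ i ∈ A, (x i - m) ^ 2) + (∑ i ∈ A, (x i - m)) ^ 2 / k := by
      intro A hA
      exact perA k hk1 x m A (mem_powersetCard_univ.mp hA)
    rw [sum_congr rfl hper, sum_add_distrib, sum_sub_distrib, sum_const,
      card_powersetCard, card_univ, Fintype.card_fin, nsmul_eq_mul,
      sum_T1 n k hk1 (fun i => (x i - m) ^ 2), ← sum_div,
      sum_T2 n k hk (fun i => (x i - m)) hzsum]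
  rw [hnum]
  -- choose identities
  have e1 : n * (n - 1).choose (k - 1) = n.choose k * k := by
    have h := Nat.add_one_mul_choose_eq (n - 1) (k - 1)
    have h1 : n - 1 + 1 = n := by omega
    have h2 : k - 1 + 1 = k := by omega
    rwa [h1, h2] at h
  have e2 : (n - 1) * (n - 2).choose (k - 2) = (n - 1).choose (k - 1) * (k - 1) := by
    have h := Nat.add_one_mul_choose_eq (n - 2) (k - 2)
    have h1 : n - 2 + 1 = n - 1 := by omega
    have h2 : k - 2 + 1 = k - 1 := by omega
    rwa [h1, h2] at h
  have cn1 : ((n - 1 : ℕ) : ℝ) = (n : ℝ) - 1 := by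
    rw [Nat.cast_sub (by omega)]; norm_num
  have ck1 : ((k - 1 : ℕ) : ℝ) = (k : ℝ) - 1 := by
    rw [Nat.cast_sub (by omega)]; norm_num
  have r1 : (n : ℝ) * ((n - 1).choose (k - 1) : ℝ) = (n.choose k : ℝ) * k := by
    exact_mod_cast e1
  have r2 : ((n : ℝ) - 1) * ((n - 2).choose (k - 2) : ℝ)
      = ((n - 1).choose (k - 1) : ℝ) * ((k : ℝ) - 1) := by
    rw [← cn1, ← ck1]
    exact_mod_cast e2
  have hC : (n.choose k : ℝ) ≠ 0 :=
    Nat.cast_ne_zero.mpr (Nat.choose_pos (le_of_lt hn)).ne'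
  have hc1 : ((n - 1).choose (k - 1) : ℝ) = (n.choose k : ℝ) * k / n := by
    rw [eq_div_iff hn0]; linarith [r1]
  have hc2 : ((n - 2).choose (k - 2) : ℝ)
      = ((n - 1).choose (k - 1) : ℝ) * ((k : ℝ) - 1) / ((n : ℝ) - 1) := by
    rw [eq_div_iff hn1]; linarith [r2]
  rw [hc2, hc1]
  field_simp
  ring

end
end
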